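/- arXiv:2411.16364 — 2 statements merged into one kernel-verified Lean document; each statement's English description precedes it below -/
import Mathlib

section
/- Let P = P_1 ∪ P_2 be a collection of cells, where P_1 and P_2 are sub-collections of cells of P having no cell in common and with V(P_1) ∩ V(P_2) = {v} for a single vertex v. Fix a monomial order < on S = K[x_v : v ∈ V(P)] and suppose that for i = 1, 2 there exists f_i ∈ S with in_<(f_i) a squarefree monomial such that I_{P_i} ∈ C_{f_i}, and that in_<(f_1 f_2 x_v) is a squarefree monomial (in particular x_v divides neither in_<(f_1) nor in_<(f_2)). Then I_P ∈ C_{f_1 f_2 x_v}; in particular, I_P is a Knutson ideal. -/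
open MvPolynomial

universe u v

/-! ### Cells and collections of cells -/

/-- A cell, identified by its lower-left corner: the cell `[a, a+(1,1)]`. -/
abbrev Cell : Type := ℕ × ℕ

/-- The four vertices (corners) of a cell. -/
def cellVertices (c : Cell) : Finset (ℕ × ℕ) :=
  {(c.1, c.2), (c.1 + 1, c.2), (c.1, c.2 + 1), (c.1 + 1, c.2 + 1)}

/-- The vertex set of a collection of cells. -/
def vertexSet (P : Finset Cell) : Finset (ℕ × ℕ) :=
  P.biUnion cellVertices

/-- Two cells share a common edge. -/
def AdjCells (c d : Cell) : Prop :=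
  (c.1 = d.1 ∧ (c.2 + 1 = d.2 ∨ d.2 + 1 = c.2)) ∨
    (c.2 = d.2 ∧ (c.1 + 1 = d.1 ∨ d.1 + 1 = c.1))

/-- A polyomino: a nonempty collection of cells with positive coordinates in which
any two cells are connected by a path of cells of the collection, consecutive
ones sharing an edge. -/
def IsPolyomino (P : Finset Cell) : Prop :=
  P.Nonempty ∧ (∀ c ∈ P, 1 ≤ c.1 ∧ 1 ≤ c.2) ∧
    ∀ c ∈ P, ∀ d ∈ P,
      Relation.ReflTransGen (fun x y => x ∈ P ∧ y ∈ P ∧ AdjCells x y) c d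

/-- A collection of cells is simple if any two cells not in it are connected by a path
of cells not in it. -/
def IsSimple (P : Finset Cell) : Prop :=
  ∀ c d : Cell, c ∉ P → d ∉ P →
    Relation.ReflTransGen (fun x y => x ∉ P ∧ y ∉ P ∧ AdjCells x y) c d

/-- A collection of cells is thin if it contains no 2×2 square of cells. -/
def IsThin (P : Finset Cell) : Prop :=
  ¬ ∃ c : Cell, c ∈ P ∧ (c.1 + 1, c.2) ∈ P ∧ (c.1, c.2 + 1) ∈ P ∧ (c.1 + 1, c.2 + 1) ∈ P

/-- The cell with lower-left corner `c` lies inside the interval `[u, w]`. -/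
def CellInInterval (u w : ℕ × ℕ) (c : Cell) : Prop :=
  u.1 ≤ c.1 ∧ c.1 + 1 ≤ w.1 ∧ u.2 ≤ c.2 ∧ c.2 + 1 ≤ w.2

/-- `[a, b]` is an inner interval of the collection of cells `P`:
it is a proper interval all of whose cells belong to `P`. -/
def IsInnerInterval (P : Finset Cell) (a b : ℕ × ℕ) : Prop :=
  a.1 < b.1 ∧ a.2 < b.2 ∧ ∀ c : Cell, CellInInterval a b c → c ∈ P

/-- A maximal inner interval of `P`. -/
def IsMaximalInnerInterval (P : Finset Cell) (a b : ℕ × ℕ) : Prop :=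
  IsInnerInterval P a b ∧
    ∀ a' b' : ℕ × ℕ, IsInnerInterval P a' b' → a'.1 ≤ a.1 → a'.2 ≤ a.2 →
      b.1 ≤ b'.1 → b.2 ≤ b'.2 → a' = a ∧ b' = b

/-! ### Convexity notions -/

def HorizontallyConvex (P : Finset Cell) : Prop :=
  ∀ i k j l : ℕ, (i, j) ∈ P → (k, j) ∈ P → i ≤ l → l ≤ k → (l, j) ∈ P

def VerticallyConvex (P : Finset Cell) : Prop :=
  ∀ i j k l : ℕ, (i, j) ∈ P → (i, k) ∈ P → j ≤ l → l ≤ k → (i, l) ∈ P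

/-- A parallelogram polyomino: a convex polyomino whose vertex set is a sublattice of ℕ². -/
def IsParallelogram (P : Finset Cell) : Prop :=
  IsPolyomino P ∧ HorizontallyConvex P ∧ VerticallyConvex P ∧
    ∀ u ∈ vertexSet P, ∀ v ∈ vertexSet P,
      (min u.1 v.1, min u.2 v.2) ∈ vertexSet P ∧ (max u.1 v.1, max u.2 v.2) ∈ vertexSet P

/-- `v` is a left-most vertex of `P`. -/
def IsLeftmost (P : Finset Cell) (v : ℕ × ℕ) : Prop :=
  v ∈ vertexSet P ∧ ∀ w ∈ vertexSet P, w.2 = v.2 → v.1 ≤ w.1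

/-- A ladder polyomino: a horizontally convex polyomino each of whose left-most vertices,
except the lowest one, is the upper-left vertex of a cell of `P`. -/
def IsLadder (P : Finset Cell) : Prop :=
  IsPolyomino P ∧ HorizontallyConvex P ∧
    ∀ v : ℕ × ℕ, IsLeftmost P v →
      (∀ w : ℕ × ℕ, IsLeftmost P w → v.2 ≤ w.2) ∨ (1 ≤ v.2 ∧ (v.1, v.2 - 1) ∈ P)

/-- The region of the plane covered by a collection of cells. -/
def spSet (P : Finset Cell) : Set (ℝ × ℝ) :=
  ⋃ c ∈ P, {x : ℝ × ℝ | (c.1 : ℝ) ≤ x.1 ∧ x.1 ≤ (c.1 : ℝ) + 1 ∧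
      (c.2 : ℝ) ≤ x.2 ∧ x.2 ≤ (c.2 : ℝ) + 1}

/-- A ladder polyomino `P` is based on a polyomino `Q`:
`sp(P) ∩ sp(Q)` is the horizontal segment from `a₁` to `(b, a₁.2)` where `a₁` is the lowest
left-most vertex of `P` and `b` is maximal with `(b, a₁.2) ∈ V(P)`. -/
def BasedOn (P Q : Finset Cell) : Prop :=
  ∃ a₁ : ℕ × ℕ, ∃ b : ℕ, IsLeftmost P a₁ ∧ (∀ w : ℕ × ℕ, IsLeftmost P w → a₁.2 ≤ w.2) ∧
    (b, a₁.2) ∈ vertexSet P ∧ (∀ v : ℕ, (v, a₁.2) ∈ vertexSet P → v ≤ b) ∧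
    spSet P ∩ spSet Q =
      {x : ℝ × ℝ | (a₁.1 : ℝ) ≤ x.1 ∧ x.1 ≤ (b : ℝ) ∧ x.2 = (a₁.2 : ℝ)}

/-! ### Closed and weakly closed paths -/

/-- A closed path polyomino. -/
def IsClosedPath (P : Finset Cell) : Prop :=
  ∃ (n : ℕ) (A : ℕ → Cell), 6 ≤ n ∧
    A n = A 0 ∧
    (∀ c : Cell, c ∈ P ↔ ∃ i < n, A i = c) ∧
    (∀ i j : ℕ, 1 ≤ i → i < j → j ≤ n → A i ≠ A j) ∧
    (∀ i < n, AdjCells (A i) (A (i + 1))) ∧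
    (∀ i < n, ∀ j < n,
      ((j : ZMod n) ≠ (i : ZMod n) - 2 ∧ (j : ZMod n) ≠ (i : ZMod n) - 1 ∧
       (j : ZMod n) ≠ (i : ZMod n) ∧ (j : ZMod n) ≠ (i : ZMod n) + 1 ∧
       (j : ZMod n) ≠ (i : ZMod n) + 2) →
      cellVertices (A i) ∩ cellVertices (A j) = ∅)

/-- A weakly closed path polyomino. -/
def IsWeaklyClosedPath (P : Finset Cell) : Prop :=
  ∃ (n : ℕ) (A : ℕ → Cell), 6 ≤ n ∧
    A n = A 0 ∧
    (∀ c : Cell, c ∈ P ↔ ∃ i < n, A i = c) ∧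
    (∀ i j : ℕ, 1 ≤ i → i < j → j ≤ n → A i ≠ A j) ∧
    (cellVertices (A 0) ∩ cellVertices (A (n - 1))).card = 1 ∧
    (∀ i : ℕ, i ≤ n - 2 → AdjCells (A i) (A (i + 1))) ∧
    (∀ i : ℕ, 1 ≤ i → i ≤ n → ∀ j : ℕ, 1 ≤ j → j ≤ n →
      ((j : ZMod n) ≠ (i : ZMod n) - 2 ∧ (j : ZMod n) ≠ (i : ZMod n) - 1 ∧
       (j : ZMod n) ≠ (i : ZMod n) ∧ (j : ZMod n) ≠ (i : ZMod n) + 1 ∧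
       (j : ZMod n) ≠ (i : ZMod n) + 2) →
      cellVertices (A i) ∩ cellVertices (A j) = ∅)

/-! ### Polyomino ideals -/

/-- The polynomial ring `K[x_v : v ∈ V(P)]`. -/
abbrev PolyRing (K : Type*) [Field K] (P : Finset Cell) : Type _ :=
  MvPolynomial {v : ℕ × ℕ // v ∈ vertexSet P} K

/-- The binomials attached to the inner intervals of a sub-collection `Q` of `P`,
viewed inside `K[x_v : v ∈ V(P)]`. -/
def innerIntervalBinomials (K : Type*) [Field K] (P Q : Finset Cell) :
    Set (PolyRing K P) :=
  {f | ∃ a b c d : {v : ℕ × ℕ // v ∈ vertexSet P},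
      IsInnerInterval Q (a : ℕ × ℕ) (b : ℕ × ℕ) ∧
      (c : ℕ × ℕ) = ((a : ℕ × ℕ).1, (b : ℕ × ℕ).2) ∧
      (d : ℕ × ℕ) = ((b : ℕ × ℕ).1, (a : ℕ × ℕ).2) ∧
      f = X a * X b - X c * X d}

/-- The ideal of inner 2-minors of a sub-collection `Q` of `P`, inside `K[x_v : v ∈ V(P)]`. -/
noncomputable def cellsIdeal (K : Type*) [Field K] (P Q : Finset Cell) : Ideal (PolyRing K P) :=
  Ideal.span (innerIntervalBinomials K P Q)

/-- The polyomino ideal `I_P`. -/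
noncomputable def polyominoIdeal (K : Type*) [Field K] (P : Finset Cell) : Ideal (PolyRing K P) :=
  cellsIdeal K P P

/-! ### Monomial orders, initial monomials, Knutson ideals -/

/-- `μ` is the initial (leading) monomial of `f` with respect to the strict
monomial-comparison relation `lt`. -/
def IsInitialMonomialRel {σ K : Type*} [CommSemiring K]
    (lt : (σ →₀ ℕ) → (σ →₀ ℕ) → Prop) (f : MvPolynomial σ K) (μ : σ →₀ ℕ) : Prop :=
  μ ∈ f.support ∧ ∀ ν ∈ f.support, ν ≠ μ → lt ν μ

/-- The strict comparison relation of a monomial order. -/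
def monomialLT {σ : Type*} (m : MonomialOrder σ) (μ ν : σ →₀ ℕ) : Prop :=
  m.toSyn μ < m.toSyn ν

/-- A squarefree monomial exponent. -/
def SquarefreeMonomial {σ : Type*} (μ : σ →₀ ℕ) : Prop := ∀ v, μ v ≤ 1

/-- The initial monomial of `f` with respect to `m` exists and is squarefree. -/
def HasSquarefreeInitial {σ K : Type*} [CommSemiring K] (m : MonomialOrder σ)
    (f : MvPolynomial σ K) : Prop :=
  ∃ μ, IsInitialMonomialRel (monomialLT m) f μ ∧ SquarefreeMonomial μ

/-- The family `C_f` of Knutson ideals associated to `f`: the smallest family of ideals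
containing `(f)` and closed under colon ideals, sums and intersections. -/
inductive KnutsonClass {σ K : Type*} [Field K] (f : MvPolynomial σ K) :
    Ideal (MvPolynomial σ K) → Prop
  | base : KnutsonClass f (Ideal.span {f})
  | colon (I J : Ideal (MvPolynomial σ K)) :
      KnutsonClass f I → KnutsonClass f (Submodule.colon I J)
  | add (I J : Ideal (MvPolynomial σ K)) :
      KnutsonClass f I → KnutsonClass f J → KnutsonClass f (I + J)
  | inter (I J : Ideal (MvPolynomial σ K)) :
      KnutsonClass f I → KnutsonClass f J → KnutsonClass f (I ⊓ J)

/-- An ideal is a Knutson ideal if it belongs to `C_f` for some `f` whose initial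
monomial (with respect to some monomial order) is squarefree. -/
def IsKnutsonIdeal {σ : Type u} {K : Type*} [Field K] (I : Ideal (MvPolynomial σ K)) : Prop :=
  ∃ (m : MonomialOrder.{u, u} σ) (f : MvPolynomial σ K),
    HasSquarefreeInitial m f ∧ KnutsonClass f I

/-! ### Height, unmixedness, homogeneity, König type -/

/-- The height of an ideal: the infimum of the heights of the primes containing it. -/
noncomputable def idealHeight {R : Type*} [CommRing R] (I : Ideal R) : ℕ∞ :=
  ⨅ (p : PrimeSpectrum R) (_ : I ≤ p.asIdeal), Order.height p

/-- An ideal is unmixed if all its associated primes have the same height. -/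
def IsUnmixed {R : Type*} [CommRing R] (I : Ideal R) : Prop :=
  ∀ p q : Ideal R, IsAssociatedPrime p (R ⧸ I) → IsAssociatedPrime q (R ⧸ I) →
    idealHeight p = idealHeight q

/-- A homogeneous ideal of a polynomial ring. -/
def IsHomogeneousIdeal {σ K : Type*} [CommSemiring K] (I : Ideal (MvPolynomial σ K)) : Prop :=
  ∀ f ∈ I, ∀ n : ℕ, MvPolynomial.homogeneousComponent n f ∈ I

/-- `I` is of König type with respect to the monomial order `m` and the polynomials
`f 0, …, f (h-1)`. -/
def IsKonigTypeWrt {σ K : Type*} [Field K] (m : MonomialOrder σ)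
    (I : Ideal (MvPolynomial σ K)) (h : ℕ) (f : Fin h → MvPolynomial σ K) : Prop :=
  idealHeight I = (h : ℕ∞) ∧
  Function.Injective f ∧
  (∃ G : Set (MvPolynomial σ K),
    (∀ g ∈ G, ∃ n : ℕ, MvPolynomial.IsHomogeneous g n) ∧
    Ideal.span G = I ∧
    (∀ g ∈ G, Ideal.span (G \ {g}) ≠ I) ∧
    ∀ i, f i ∈ G) ∧
  ∃ μ : Fin h → (σ →₀ ℕ),
    (∀ i, IsInitialMonomialRel (monomialLT m) (f i) (μ i)) ∧
    RingTheory.Sequence.IsRegular (MvPolynomial σ K)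
      (List.ofFn fun i =>
        (MvPolynomial.monomial (μ i) (MvPolynomial.coeff (μ i) (f i)) : MvPolynomial σ K))

/-- `I` is of König type. -/
def IsKonigType {σ : Type u} {K : Type*} [Field K] (I : Ideal (MvPolynomial σ K)) : Prop :=
  ∃ (m : MonomialOrder.{u, u} σ) (h : ℕ) (f : Fin h → MvPolynomial σ K), IsKonigTypeWrt m I h f

/-! ### The graded reverse lexicographic order used in the paper -/

/-- The variable order `x_{(i,j)} < x_{(k,l)}` iff `i < k`, or `i = k` and `j < l`. -/
def VarLT (u v : ℕ × ℕ) : Prop := u.1 < v.1 ∨ (u.1 = v.1 ∧ u.2 < v.2)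

/-- The strict graded reverse lexicographic comparison of exponent vectors, where
variables are embedded into ℕ² and ordered by `VarLT`. -/
def GrevlexLT {σ : Type*} (emb : σ → ℕ × ℕ) (μ ν : σ →₀ ℕ) : Prop :=
  (μ.sum fun _ e => e) < (ν.sum fun _ e => e) ∨
    ((μ.sum fun _ e => e) = (ν.sum fun _ e => e) ∧
      ∃ v, ν v < μ v ∧ ∀ w, VarLT (emb w) (emb v) → μ w = ν w)

/-- The initial ideal of `I` with respect to the relation `lt`. -/
noncomputable def initialIdealRel {σ K : Type*} [Field K] (lt : (σ →₀ ℕ) → (σ →₀ ℕ) → Prop)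
    (I : Ideal (MvPolynomial σ K)) : Ideal (MvPolynomial σ K) :=
  Ideal.span {g | ∃ f ∈ I, ∃ μ, IsInitialMonomialRel lt f μ ∧
    g = MvPolynomial.monomial μ (1 : K)}

/-- `G` is a Gröbner basis of `I` with respect to the relation `lt`. -/
def IsGroebnerBasisRel {σ K : Type*} [Field K] (lt : (σ →₀ ℕ) → (σ →₀ ℕ) → Prop)
    (G : Set (MvPolynomial σ K)) (I : Ideal (MvPolynomial σ K)) : Prop :=
  (∀ g ∈ G, g ≠ 0 ∧ g ∈ I) ∧
    Ideal.span {g | ∃ f ∈ G, ∃ μ, IsInitialMonomialRel lt f μ ∧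
      g = MvPolynomial.monomial μ (1 : K)} = initialIdealRel lt I

/-! ### Anti-diagonal chains of vertices and the associated determinants -/

/-- The vertices `v_{k,l} = (i+l, j+n+1-l)`, `1 ≤ l ≤ n`, of an anti-diagonal chain. -/
def chainVerts (i j n : ℕ) : Finset (ℕ × ℕ) :=
  (Finset.Icc 1 n).image fun l => (i + l, j + n + 1 - l)

/-- The cells whose anti-diagonal vertices are consecutive vertices of the chain. -/
def chainCells (i j n : ℕ) : Finset Cell :=
  (Finset.Icc 1 (n - 1)).image fun l => (i + l, j + n - l)

/-- The chain starting at `(i+1, j+n)` of length `n` is a maximal successor-chain in `P`. -/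
def IsDiagChain (P : Finset Cell) (i j n : ℕ) : Prop :=
  1 ≤ n ∧
  (∀ l : ℕ, 1 ≤ l → l ≤ n → (i + l, j + n + 1 - l) ∈ vertexSet P) ∧
  (∀ l : ℕ, 1 ≤ l → l ≤ n - 1 → (i + l, j + n - l) ∈ P) ∧
  (i, j + n) ∉ P ∧
  (i + n, j) ∉ P

/-- The data `c k = (i_k, j_k, n_k)`, `k : Fin s`, is the chain partition of `V(P)`. -/
def IsDiagChainPartition (P : Finset Cell) (s : ℕ) (c : Fin s → ℕ × ℕ × ℕ) : Prop :=
  (∀ k, IsDiagChain P (c k).1 (c k).2.1 (c k).2.2) ∧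
  (∀ k l, k ≠ l →
    Disjoint (chainVerts (c k).1 (c k).2.1 (c k).2.2)
      (chainVerts (c l).1 (c l).2.1 (c l).2.2)) ∧
  (Finset.univ.biUnion (fun k => chainVerts (c k).1 (c k).2.1 (c k).2.2) = vertexSet P) ∧
  (∀ k l : Fin s, k < l →
    ((c k).1 + 1) + ((c k).2.1 + (c k).2.2) < ((c l).1 + 1) + ((c l).2.1 + (c l).2.2) ∨
    (((c k).1 + 1) + ((c k).2.1 + (c k).2.2) = ((c l).1 + 1) + ((c l).2.1 + (c l).2.2) ∧
      (c k).1 + 1 < (c l).1 + 1))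

/-- The determinant `f_k` of the matrix `M_k` associated to a chain: the `(a,b)` entry is
`x_{(i+a, j+b)}` if `(i+a, j+b) ∈ V(P)` and `0` otherwise (`1 ≤ a, b ≤ n`). -/
noncomputable def chainDet (K : Type*) [Field K] (P : Finset Cell) (i j n : ℕ) :
    PolyRing K P :=
  Matrix.det (Matrix.of fun a b : Fin n =>
    if h : (i + (a : ℕ) + 1, j + (b : ℕ) + 1) ∈ vertexSet P then
      (X ⟨(i + (a : ℕ) + 1, j + (b : ℕ) + 1), h⟩ : PolyRing K P) else 0)

/-- The exponent vector of the squarefree monomial `∏_{v ∈ V} x_v` inside `K[x_v : v ∈ V(P)]`. -/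
noncomputable def vertexMonomial (P : Finset Cell) (V : Finset (ℕ × ℕ)) :
    {v : ℕ × ℕ // v ∈ vertexSet P} →₀ ℕ :=
  ∑ v ∈ Finset.filter (fun v : {v : ℕ × ℕ // v ∈ vertexSet P} => (v : ℕ × ℕ) ∈ V)
      (vertexSet P).attach, Finsupp.single v 1

/-! ### The conditions (C1), (C2), (C3) on thin collections of cells -/

/-- (C1): `P` contains no three cells with upper-left vertices
`(i,j), (i+1,j-1), (i+2,j-2)`. -/
def CondC1 (P : Finset Cell) : Prop :=
  ¬ ∃ i m : ℕ, (i, m + 2) ∈ P ∧ (i + 1, m + 1) ∈ P ∧ (i + 2, m) ∈ P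

/-- (C2): for a vertical maximal inner interval `[a, b]` of width one, neither the cell
with lower-right vertex `(a.1, b.2)` nor the cell with upper-left vertex `(a.1+1, a.2)`
belongs to `P`. -/
def CondC2 (P : Finset Cell) : Prop :=
  ∀ a b : ℕ × ℕ, IsMaximalInnerInterval P a b → b.1 = a.1 + 1 →
    (1 ≤ a.1 → (a.1 - 1, b.2) ∉ P) ∧ (1 ≤ a.2 → (a.1 + 1, a.2 - 1) ∉ P)

/-- (C3): for a horizontal maximal inner interval `[a, b]` of height one, neither the cell
with lower-right vertex `(a.1, a.2+1)` nor the cell with upper-left vertex `(b.1, a.2)`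
belongs to `P`. -/
def CondC3 (P : Finset Cell) : Prop :=
  ∀ a b : ℕ × ℕ, IsMaximalInnerInterval P a b → b.2 = a.2 + 1 →
    (1 ≤ a.1 → (a.1 - 1, a.2 + 1) ∉ P) ∧ (1 ≤ a.2 → (b.1, a.2 - 1) ∉ P)



section Aux

/-- Colon trick: `(ab) : (b) = (a)` in a domain for `b ≠ 0`. -/
lemma colon_span_mul {R : Type*} [CommRing R] [IsDomain R] (a b : R) (hb : b ≠ 0) :
    Submodule.colon (Ideal.span {a * b}) (Ideal.span {b}) = Ideal.span {a} := by
  ext x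
  rw [Submodule.mem_colon]
  constructor
  · intro h
    have := h b (Ideal.subset_span rfl)
    rw [smul_eq_mul, Ideal.mem_span_singleton] at this
    obtain ⟨c, hc⟩ := this
    rw [Ideal.mem_span_singleton]
    exact ⟨c, mul_right_cancel₀ hb (by rw [hc]; ring)⟩
  · intro h p hp
    rw [Ideal.mem_span_singleton] at h
    rw [SetLike.mem_coe, Ideal.mem_span_singleton] at hp  -- hp : b ∣ p
    rw [Ideal.mem_span_singleton]
    obtain ⟨c, rfl⟩ := h
    obtain ⟨d, rfl⟩ := hp
    exact ⟨c * d, by rw [smul_eq_mul]; ring⟩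

lemma KnutsonClass.trans {σ K : Type*} [Field K] {f g : MvPolynomial σ K}
    (h : KnutsonClass g (Ideal.span {f})) {I : Ideal (MvPolynomial σ K)}
    (hI : KnutsonClass f I) : KnutsonClass g I := by
  induction hI with
  | base => exact h
  | colon I J _ ih => exact KnutsonClass.colon I J ih
  | add I J _ _ ih1 ih2 => exact KnutsonClass.add I J ih1 ih2
  | inter I J _ _ ih1 ih2 => exact KnutsonClass.inter I J ih1 ih2

lemma mem_vertexSet_of_mem {P : Finset Cell} {c : Cell} (hc : c ∈ P) {w : ℕ × ℕ}
    (hw : w ∈ cellVertices c) : w ∈ vertexSet P :=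
  Finset.mem_biUnion.mpr ⟨c, hc, hw⟩

/-- Two cells of `P₁ ∪ P₂` sharing two distinct vertices lie in the same part. -/
lemma samePart {P₁ P₂ : Finset Cell} (_hcelldisj : Disjoint P₁ P₂) {v : ℕ × ℕ}
    (hv : vertexSet P₁ ∩ vertexSet P₂ = {v}) {c d : Cell}
    (hc : c ∈ P₁ ∪ P₂) (hd : d ∈ P₁ ∪ P₂) {w₁ w₂ : ℕ × ℕ} (hne : w₁ ≠ w₂)
    (h1c : w₁ ∈ cellVertices c) (h1d : w₁ ∈ cellVertices d)
    (h2c : w₂ ∈ cellVertices c) (h2d : w₂ ∈ cellVertices d) :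
    (c ∈ P₁ ↔ d ∈ P₁) := by
  have key : ∀ x y : Cell, x ∈ P₁ → y ∈ P₂ →
      w₁ ∈ cellVertices x → w₁ ∈ cellVertices y →
      w₂ ∈ cellVertices x → w₂ ∈ cellVertices y → False := by
    intro x y hx hy h1x h1y h2x h2y
    have e1 : w₁ = v := by
      have : w₁ ∈ vertexSet P₁ ∩ vertexSet P₂ :=
        Finset.mem_inter.mpr ⟨mem_vertexSet_of_mem hx h1x, mem_vertexSet_of_mem hy h1y⟩
      rw [hv] at this; exact Finset.mem_singleton.mp this
    have e2 : w₂ = v := by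
      have : w₂ ∈ vertexSet P₁ ∩ vertexSet P₂ :=
        Finset.mem_inter.mpr ⟨mem_vertexSet_of_mem hx h2x, mem_vertexSet_of_mem hy h2y⟩
      rw [hv] at this; exact Finset.mem_singleton.mp this
    exact hne (e1.trans e2.symm)
  constructor
  · intro hc1
    rcases Finset.mem_union.mp hd with hd1 | hd2
    · exact hd1
    · exact absurd (key c d hc1 hd2 h1c h1d h2c h2d) (fun h => h)
  · intro hd1
    rcases Finset.mem_union.mp hc with hc1 | hc2
    · exact hc1
    · exact absurd (key d c hd1 hc2 h1d h1c h2d h2c) (fun h => h)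

/-- An inner interval of `P₁ ∪ P₂` (glued at one vertex) is an inner interval
of `P₁` or of `P₂`. -/
lemma innerInterval_union {P₁ P₂ : Finset Cell} (hcelldisj : Disjoint P₁ P₂) {v : ℕ × ℕ}
    (hv : vertexSet P₁ ∩ vertexSet P₂ = {v}) {a b : ℕ × ℕ}
    (h : IsInnerInterval (P₁ ∪ P₂) a b) :
    IsInnerInterval P₁ a b ∨ IsInnerInterval P₂ a b := by
  obtain ⟨h1, h2, hall⟩ := h
  -- every cell of the interval is in the same part as the corner cell
  have key : ∀ n i j, (i - a.1) + (j - a.2) = n → CellInInterval a b (i, j) →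
      ((i, j) ∈ P₁ ↔ (a.1, a.2) ∈ P₁) := by
    intro n
    induction n using Nat.strong_induction_on with
    | _ n ih =>
      intro i j hn hcell
      obtain ⟨hi1, hi2, hj1, hj2⟩ := hcell
      rcases Nat.lt_or_ge a.1 i with hia | hia
      · -- step left: (i-1, j) and (i, j) share vertices (i, j), (i, j+1)
        obtain ⟨i, rfl⟩ : ∃ i', i = i' + 1 := ⟨i - 1, (Nat.succ_pred_eq_of_pos (Nat.lt_of_le_of_lt (Nat.zero_le _) hia)).symm⟩
        have hprev : CellInInterval a b (i, j) :=
          ⟨Nat.lt_succ_iff.mp hia, le_trans (by omega) hi2, hj1, hj2⟩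
        have ihp := ih ((i - a.1) + (j - a.2)) (by omega) i j rfl hprev
        have hstep : ((i, j) ∈ P₁ ↔ (i + 1, j) ∈ P₁) := by
          refine samePart hcelldisj hv (hall _ hprev) (hall _ ⟨hi1, hi2, hj1, hj2⟩)
            (w₁ := (i + 1, j)) (w₂ := (i + 1, j + 1)) (by simp) ?_ ?_ ?_ ?_ <;>
            simp [cellVertices]
        rw [← hstep, ihp]
      · rcases Nat.lt_or_ge a.2 j with hja | hja
        · obtain ⟨j, rfl⟩ : ∃ j', j = j' + 1 := ⟨j - 1, (Nat.succ_pred_eq_of_pos (Nat.lt_of_le_of_lt (Nat.zero_le _) hja)).symm⟩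
          have hprev : CellInInterval a b (i, j) :=
            ⟨hi1, hi2, Nat.lt_succ_iff.mp hja, le_trans (by omega) hj2⟩
          have ihp := ih ((i - a.1) + (j - a.2)) (by omega) i j rfl hprev
          have hstep : ((i, j) ∈ P₁ ↔ (i, j + 1) ∈ P₁) := by
            refine samePart hcelldisj hv (hall _ hprev) (hall _ ⟨hi1, hi2, hj1, hj2⟩)
              (w₁ := (i, j + 1)) (w₂ := (i + 1, j + 1)) (by simp) ?_ ?_ ?_ ?_ <;>
              simp [cellVertices]
          rw [← hstep, ihp]
        · have : i = a.1 := le_antisymm hia hi1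
          have : j = a.2 := le_antisymm hja hj1
          subst ‹i = a.1›; subst ‹j = a.2›
          exact Iff.rfl
  have hcorner : CellInInterval a b (a.1, a.2) := ⟨le_refl _, h1, le_refl _, h2⟩
  rcases Finset.mem_union.mp (hall _ hcorner) with hc | hc
  · left
    refine ⟨h1, h2, fun c hcI => ?_⟩
    have := (key _ c.1 c.2 rfl hcI).mpr hc
    simpa using this
  · right
    refine ⟨h1, h2, fun c hcI => ?_⟩
    have hnot : (a.1, a.2) ∉ P₁ := fun h' => (Finset.disjoint_left.mp hcelldisj h') hc
    have hc' : c ∈ P₁ ∪ P₂ := hall _ hcI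
    rcases Finset.mem_union.mp hc' with h' | h'
    · exact absurd ((key _ c.1 c.2 rfl hcI).mp (by simpa using h')) hnot
    · exact h'

end Aux

/-- If `P = P₁ ∪ P₂` with no common cell and `V(P₁) ∩ V(P₂) = {v}`,
`I_{P₁} ∈ C_{f₁}`, `I_{P₂} ∈ C_{f₂}` and `in_<(f₁ f₂ x_v)` is squarefree, then
`I_P ∈ C_{f₁ f₂ x_v}`. -/
theorem glue_at_vertex_knutson (K : Type*) [Field K] (P P₁ P₂ : Finset Cell)
    (hunion : P = P₁ ∪ P₂) (hcelldisj : Disjoint P₁ P₂)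
    (v : ℕ × ℕ) (hv : vertexSet P₁ ∩ vertexSet P₂ = {v}) (hvP : v ∈ vertexSet P)
    (m : MonomialOrder.{0, v} {u : ℕ × ℕ // u ∈ vertexSet P})
    (f₁ f₂ : PolyRing K P)
    (h₁ : HasSquarefreeInitial m f₁) (h₂ : HasSquarefreeInitial m f₂)
    (hK₁ : KnutsonClass f₁ (cellsIdeal K P P₁))
    (hK₂ : KnutsonClass f₂ (cellsIdeal K P P₂))
    (hsf : HasSquarefreeInitial m (f₁ * f₂ * X ⟨v, hvP⟩)) :
    KnutsonClass (f₁ * f₂ * X ⟨v, hvP⟩) (polyominoIdeal K P) := by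
  subst hunion
  have hf₁ : f₁ ≠ 0 := by
    obtain ⟨μ, ⟨hμ, -⟩, -⟩ := h₁
    intro h; rw [h] at hμ; simp at hμ
  have hf₂ : f₂ ≠ 0 := by
    obtain ⟨μ, ⟨hμ, -⟩, -⟩ := h₂
    intro h; rw [h] at hμ; simp at hμ
  have hX : (X ⟨v, hvP⟩ : PolyRing K (P₁ ∪ P₂)) ≠ 0 := X_ne_zero _
  set g : PolyRing K (P₁ ∪ P₂) := f₁ * f₂ * X ⟨v, hvP⟩ with hg
  have hg1 : KnutsonClass g (Ideal.span {f₁}) := by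
    have h := KnutsonClass.colon (f := g) (Ideal.span {g})
      (Ideal.span {f₂ * X ⟨v, hvP⟩}) KnutsonClass.base
    have e : g = f₁ * (f₂ * X ⟨v, hvP⟩) := by rw [hg]; ring
    rwa [show ({g} : Set (PolyRing K (P₁ ∪ P₂))) = {f₁ * (f₂ * X ⟨v, hvP⟩)} by rw [e],
      colon_span_mul _ _ (mul_ne_zero hf₂ hX)] at h
  have hg2 : KnutsonClass g (Ideal.span {f₂}) := by
    have h := KnutsonClass.colon (f := g) (Ideal.span {g})
      (Ideal.span {f₁ * X ⟨v, hvP⟩}) KnutsonClass.base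
    have e : g = f₂ * (f₁ * X ⟨v, hvP⟩) := by rw [hg]; ring
    rwa [show ({g} : Set (PolyRing K (P₁ ∪ P₂))) = {f₂ * (f₁ * X ⟨v, hvP⟩)} by rw [e],
      colon_span_mul _ _ (mul_ne_zero hf₁ hX)] at h
  have hKP₁ : KnutsonClass g (cellsIdeal K (P₁ ∪ P₂) P₁) := hg1.trans hK₁
  have hKP₂ : KnutsonClass g (cellsIdeal K (P₁ ∪ P₂) P₂) := hg2.trans hK₂
  have hsets : innerIntervalBinomials K (P₁ ∪ P₂) (P₁ ∪ P₂) =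
      innerIntervalBinomials K (P₁ ∪ P₂) P₁ ∪ innerIntervalBinomials K (P₁ ∪ P₂) P₂ := by
    ext f
    constructor
    · rintro ⟨a, b, c, d, hI, hc, hd, rfl⟩
      rcases innerInterval_union hcelldisj hv hI with h | h
      · exact Or.inl ⟨a, b, c, d, h, hc, hd, rfl⟩
      · exact Or.inr ⟨a, b, c, d, h, hc, hd, rfl⟩
    · rintro (⟨a, b, c, d, hI, hc, hd, rfl⟩ | ⟨a, b, c, d, hI, hc, hd, rfl⟩)
      · exact ⟨a, b, c, d, ⟨hI.1, hI.2.1,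
          fun c hc => Finset.mem_union_left _ (hI.2.2 c hc)⟩, hc, hd, rfl⟩
      · exact ⟨a, b, c, d, ⟨hI.1, hI.2.1,
          fun c hc => Finset.mem_union_right _ (hI.2.2 c hc)⟩, hc, hd, rfl⟩
  have heq : polyominoIdeal K (P₁ ∪ P₂) =
      cellsIdeal K (P₁ ∪ P₂) P₁ + cellsIdeal K (P₁ ∪ P₂) P₂ := by
    rw [polyominoIdeal, cellsIdeal, hsets, Ideal.span_union]
    rw [cellsIdeal, cellsIdeal, Submodule.add_eq_sup]
  rw [heq]
  exact KnutsonClass.add _ _ hKP₁ hKP₂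
end

section
/- Let Q be a parallelogram polyomino and Q' a sub-polyomino of Q that is also a parallelogram polyomino, and set P = Q ∖ Q' (a collection of cells). With the chain partition V_1, …, V_s of V(P) and the associated cell sets 𝒞_k, let a = min{i : V_i ∩ V(Q') ≠ ∅}, b = max{i : V_i ∩ V(Q') ≠ ∅}, Q_1 = ∪_{i < b} 𝒞_i and Q_2 = ∪_{i > a} 𝒞_i. Then I_{Q_1} + I_{Q_2} = I_P if and only if there is no inner interval of P that contains a cell of 𝒞_a and a cell of 𝒞_b. -/
open MvPolynomial

universe u v

section AuxGeom

open Relation Finset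

/-- Characterization of vertex membership. -/
lemma pg_mem_vertexSet_iff {P : Finset Cell} {v : ℕ × ℕ} :
    v ∈ vertexSet P ↔ ∃ e ∈ P, (e.1 = v.1 ∨ e.1 + 1 = v.1) ∧ (e.2 = v.2 ∨ e.2 + 1 = v.2) := by
  unfold vertexSet cellVertices
  simp only [Finset.mem_biUnion, Finset.mem_insert, Finset.mem_singleton, Prod.ext_iff]
  constructor
  · rintro ⟨e, he, h⟩
    exact ⟨e, he, by omega⟩
  · rintro ⟨e, he, h1, h2⟩
    exact ⟨e, he, by omega⟩

lemma pg_vert_ll {P : Finset Cell} {x y : ℕ} (h : (x, y) ∈ P) : (x, y) ∈ vertexSet P :=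
  pg_mem_vertexSet_iff.2 ⟨(x, y), h, Or.inl rfl, Or.inl rfl⟩

lemma pg_vert_lr {P : Finset Cell} {x y : ℕ} (h : (x, y) ∈ P) : (x + 1, y) ∈ vertexSet P :=
  pg_mem_vertexSet_iff.2 ⟨(x, y), h, Or.inr rfl, Or.inl rfl⟩

lemma pg_vert_ul {P : Finset Cell} {x y : ℕ} (h : (x, y) ∈ P) : (x, y + 1) ∈ vertexSet P :=
  pg_mem_vertexSet_iff.2 ⟨(x, y), h, Or.inl rfl, Or.inr rfl⟩

lemma pg_vert_ur {P : Finset Cell} {x y : ℕ} (h : (x, y) ∈ P) : (x + 1, y + 1) ∈ vertexSet P :=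
  pg_mem_vertexSet_iff.2 ⟨(x, y), h, Or.inr rfl, Or.inr rfl⟩

/-- Consecutive nonempty columns of a polyomino share a row. -/
lemma pg_col_overlap {F : Finset Cell} (hF : IsParallelogram F)
    {x y y' : ℕ} (h : (x, y) ∈ F) (h' : (x + 1, y') ∈ F) :
    ∃ z, (x, z) ∈ F ∧ (x + 1, z) ∈ F := by
  have key : ∀ d : Cell,
      Relation.ReflTransGen (fun u v => u ∈ F ∧ v ∈ F ∧ AdjCells u v) (x, y) d →
      (∃ z, (x, z) ∈ F ∧ (x + 1, z) ∈ F) ∨ d.1 ≤ x := by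
    intro d hd
    induction hd with
    | refl => right; simp
    | @tail e d' _ hstep ih =>
        rcases ih with ih | ih
        · exact Or.inl ih
        · obtain ⟨he, hd', hadj⟩ := hstep
          rcases hadj with ⟨h1, _⟩ | ⟨h1, h2 | h2⟩
          · right; omega
          · by_cases hc : d'.1 ≤ x
            · exact Or.inr hc
            · left
              have hex : e.1 = x := by omega
              refine ⟨e.2, ?_, ?_⟩
              · have : (x, e.2) = e := by rw [← hex]
                rwa [this]
              · have : (x + 1, e.2) = d' := by
                  have : d'.2 = e.2 := h1.symm
                  rw [Prod.ext_iff]; constructor <;> simp <;> omega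
                rwa [this]
          · right; omega
  rcases key (x + 1, y') (hF.1.2.2 _ h _ h') with h | h
  · exact h
  · simp at h
/-- Column interval: any column between two nonempty columns is nonempty. -/
lemma pg_col_between {F : Finset Cell} (hF : IsParallelogram F)
    {cc d : Cell} (hc : cc ∈ F) (hd : d ∈ F) {z : ℕ} (h1 : cc.1 ≤ z) (h2 : z ≤ d.1) :
    ∃ y, (z, y) ∈ F := by
  have key : ∀ d' : Cell,
      Relation.ReflTransGen (fun u v => u ∈ F ∧ v ∈ F ∧ AdjCells u v) cc d' →
      (∃ y, (z, y) ∈ F) ∨ d'.1 < z := by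
    intro d' hd'
    induction hd' with
    | refl =>
        rcases Nat.lt_or_ge cc.1 z with h | h
        · exact Or.inr h
        · refine Or.inl ⟨cc.2, ?_⟩
          have hz : cc.1 = z := by omega
          rw [← hz, Prod.mk.eta]; exact hc
    | @tail e d'' _ hstep ih =>
        rcases ih with ih | ih
        · exact Or.inl ih
        · obtain ⟨he, hd'', hadj⟩ := hstep
          rcases hadj with ⟨h1', _⟩ | ⟨h1', h2' | h2'⟩
          · right; omega
          · by_cases hc' : d''.1 < z
            · exact Or.inr hc'
            · refine Or.inl ⟨d''.2, ?_⟩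
              have hz : d''.1 = z := by omega
              rw [← hz, Prod.mk.eta]; exact hd''
          · right; omega
  rcases key d (hF.1.2.2 _ hc _ hd) with h | h
  · exact h
  · omega

/-- Bottoms of columns are nondecreasing. -/
lemma pg_loMono {F : Finset Cell} (hF : IsParallelogram F)
    {x y₀ y' : ℕ} (h : (x, y₀) ∈ F) (h' : (x + 1, y') ∈ F) :
    ∃ y ≤ y', (x, y) ∈ F := by
  by_contra hno
  push_neg at hno
  have hex : ∃ y, (x, y) ∈ F := ⟨y₀, h⟩
  classical
  set y₁ := Nat.find hex with hy₁def
  have hy₁ : (x, y₁) ∈ F := Nat.find_spec hex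
  have hy₁min : ∀ m, (x, m) ∈ F → y₁ ≤ m := fun m hm => Nat.find_min' hex hm
  have hlt : y' < y₁ := by
    by_contra hh; push_neg at hh; exact hno y₁ hh hy₁
  have hmin := (hF.2.2.2 _ (pg_vert_ll hy₁) _ (pg_vert_ll h')).1
  simp only [show min x (x+1) = x by omega, show min y₁ y' = y' by omega] at hmin
  obtain ⟨e, he, he1, he2⟩ := pg_mem_vertexSet_iff.1 hmin
  simp only at he1 he2
  have heF : (e.1, e.2) ∈ F := by rw [Prod.mk.eta]; exact he
  rcases he1 with he1 | he1
  · -- e.1 = x, e.2 ≤ y' < y₁ : contradicts minimality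
    have : y₁ ≤ e.2 := hy₁min e.2 (by rw [he1] at heF; exact heF)
    omega
  · -- e.1 + 1 = x
    have hxy' : (x, y') ∈ F := by
      rcases he2 with he2 | he2
      · -- e.2 = y' : horizontal convexity
        have h1 : (e.1, y') ∈ F := by rw [← he2]; exact heF
        exact hF.2.1 e.1 (x + 1) y' x h1 h' (by omega) (by omega)
      · -- e.2 + 1 = y'
        obtain ⟨zz, hz1, hz2⟩ := pg_col_overlap hF heF (by rw [he1]; exact hy₁)
        have hzz : y₁ ≤ zz := hy₁min zz (by rw [← he1]; exact hz2)
        have h1 : (e.1, y') ∈ F := hF.2.2.1 e.1 e.2 zz y' heF hz1 (by omega) (by omega)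
        exact hF.2.1 e.1 (x + 1) y' x h1 h' (by omega) (by omega)
    exact hno y' le_rfl hxy'

/-- Tops of columns are nondecreasing. -/
lemma pg_hiMono {F : Finset Cell} (hF : IsParallelogram F)
    {x y₀ y' : ℕ} (h : (x, y₀) ∈ F) (h' : (x + 1, y') ∈ F) :
    ∃ y, y₀ ≤ y ∧ (x + 1, y) ∈ F := by
  by_contra hno
  push_neg at hno
  classical
  set S := (F.filter (fun e => e.1 = x + 1)).image Prod.snd with hSdef
  have hS : y' ∈ S := by
    simp only [hSdef, Finset.mem_image, Finset.mem_filter]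
    exact ⟨(x + 1, y'), ⟨h', rfl⟩, rfl⟩
  set y₂ := S.max' ⟨y', hS⟩ with hy₂def
  have hy₂ : (x + 1, y₂) ∈ F := by
    have := S.max'_mem ⟨y', hS⟩
    simp only [hSdef, Finset.mem_image, Finset.mem_filter] at this
    obtain ⟨e, ⟨he, he1⟩, he2⟩ := this
    have : (x + 1, y₂) = e := by rw [Prod.ext_iff]; exact ⟨he1.symm, he2.symm⟩
    rw [this]; exact he
  have hy₂max : ∀ y, (x + 1, y) ∈ F → y ≤ y₂ := by
    intro y hy
    apply S.le_max'
    simp only [hSdef, Finset.mem_image, Finset.mem_filter]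
    exact ⟨(x + 1, y), ⟨hy, rfl⟩, rfl⟩
  have hlt : y₂ < y₀ := by
    by_contra hh; push_neg at hh; exact hno y₂ hh hy₂
  have hmax := (hF.2.2.2 _ (pg_vert_ul h) _ (pg_vert_ur hy₂)).2
  simp only [show max x (x+1+1) = x + 2 by omega, show max (y₀+1) (y₂+1) = y₀ + 1 by omega]
    at hmax
  obtain ⟨e, he, he1, he2⟩ := pg_mem_vertexSet_iff.1 hmax
  simp only at he1 he2
  have heF : (e.1, e.2) ∈ F := by rw [Prod.mk.eta]; exact he
  rcases he1 with he1 | he1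
  · -- e.1 = x + 2
    obtain ⟨zz, hz1, hz2⟩ := pg_col_overlap hF hy₂ (by
      rw [show x + 1 + 1 = e.1 by omega]; exact heF)
    have hzz : zz ≤ y₂ := hy₂max zz hz1
    have h1 : (x + 2, y₀) ∈ F := by
      have := hF.2.2.1 (x + 2) zz e.2 y₀ (by rw [show x + 2 = x + 1 + 1 from rfl]; exact hz2)
        (by rw [show x + 2 = e.1 by omega]; exact heF) (by omega) (by omega)
      exact this
    have h2 : (x + 1, y₀) ∈ F := hF.2.1 x (x + 2) y₀ (x + 1) h h1 (by omega) (by omega)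
    exact absurd (hy₂max _ h2) (by omega)
  · -- e.1 + 1 = x + 2, i.e. e.1 = x + 1 : contradicts maximality since e.2 ≥ y₀
    have : (x + 1, e.2) ∈ F := by rw [show x + 1 = e.1 by omega]; exact heF
    have := hy₂max _ this
    omega
/-- Chained `pg_loMono`: if column `z ≤ x` is nonempty, it has an element `≤ y`. -/
lemma pg_loChain {F : Finset Cell} (hF : IsParallelogram F) :
    ∀ k : ℕ, ∀ {x y z w₀ : ℕ}, (x, y) ∈ F → (z, w₀) ∈ F → z ≤ x → x - z = k →
      ∃ w ≤ y, (z, w) ∈ F := by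
  intro k
  induction k with
  | zero =>
      intro x y z w₀ h _ hz hk
      exact ⟨y, le_rfl, by rw [show z = x by omega]; exact h⟩
  | succ n ih =>
      intro x y z w₀ h hw₀ hz hk
      obtain ⟨w₁, hw₁⟩ := pg_col_between hF hw₀ h (show z ≤ x - 1 by omega)
        (show x - 1 ≤ x by omega)
      obtain ⟨w₂, hw₂le, hw₂⟩ := pg_loMono hF hw₁ (show (x - 1 + 1, y) ∈ F by
        rw [show x - 1 + 1 = x by omega]; exact h)
      obtain ⟨w, hwle, hw⟩ := ih hw₂ hw₀ (show z ≤ x - 1 by omega) (by omega)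
      exact ⟨w, le_trans hwle hw₂le, hw⟩

/-- Chained `pg_hiMono`: if column `z ≥ x` is nonempty, it has an element `≥ y`. -/
lemma pg_hiChain {F : Finset Cell} (hF : IsParallelogram F) :
    ∀ k : ℕ, ∀ {x y z w₀ : ℕ}, (x, y) ∈ F → (z, w₀) ∈ F → x ≤ z → z - x = k →
      ∃ w, y ≤ w ∧ (z, w) ∈ F := by
  intro k
  induction k with
  | zero =>
      intro x y z w₀ h _ hz hk
      exact ⟨y, le_rfl, by rw [show z = x by omega]; exact h⟩
  | succ n ih =>
      intro x y z w₀ h hw₀ hz hk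
      obtain ⟨w₁, hw₁⟩ := pg_col_between hF h hw₀ (show x ≤ x + 1 by omega)
        (show x + 1 ≤ z by omega)
      obtain ⟨w₂, hw₂le, hw₂⟩ := pg_hiMono hF h hw₁
      obtain ⟨w, hwle, hw⟩ := ih hw₂ hw₀ (show x + 1 ≤ z by omega) (by omega)
      exact ⟨w, le_trans hw₂le hwle, hw⟩

/-- Anti-diagonal runs of a parallelogram are contiguous. -/
lemma pg_runContig {F : Finset Cell} (hF : IsParallelogram F)
    {x y x' y' z : ℕ} (hc : (x, y) ∈ F) (hd : (x', y') ∈ F) (hlvl : x + y = x' + y')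
    (hz : x ≤ z) (hz' : z ≤ x') : (z, x + y - z) ∈ F := by
  obtain ⟨w₀, hw₀⟩ := pg_col_between hF hc hd hz hz'
  obtain ⟨w₁, hw₁le, hw₁⟩ := pg_hiChain hF (z - x) hc hw₀ hz rfl
  obtain ⟨w₂, hw₂le, hw₂⟩ := pg_loChain hF (x' - z) hd hw₀ hz' rfl
  exact hF.2.2.1 z w₂ w₁ (x + y - z) hw₂ hw₁ (by omega) (by omega)

/-- Step lemma (down-right): some cell on the next-lower diagonal has `x`-coordinate `≥ x - 1`. -/
lemma pg_stepDR {F : Finset Cell} (hF : IsParallelogram F)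
    {x y : ℕ} {d : Cell} (hc : (x, y) ∈ F) (hd : d ∈ F) (hlvl : d.1 + d.2 + 1 = x + y) :
    ∃ e ∈ F, e.1 + e.2 + 1 = x + y ∧ x ≤ e.1 + 1 := by
  by_cases h1 : ∃ y₁, y₁ + 1 = y ∧ (x, y₁) ∈ F
  · obtain ⟨y₁, hy₁, hm⟩ := h1
    exact ⟨(x, y₁), hm, by omega, by omega⟩
  by_cases h2 : ∃ x₁, x₁ + 1 = x ∧ (x₁, y) ∈ F
  · obtain ⟨x₁, hx₁, hm⟩ := h2
    exact ⟨(x₁, y), hm, by omega, by omega⟩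
  push_neg at h1 h2
  refine ⟨d, hd, by omega, ?_⟩
  by_contra hcon
  push_neg at hcon
  have hd1 : d.1 + 2 ≤ x := hcon
  have hdF : (d.1, d.2) ∈ F := by rw [Prod.mk.eta]; exact hd
  obtain ⟨w₁, hw₁⟩ := pg_col_between hF hdF hc (show d.1 ≤ x - 1 by omega)
    (show x - 1 ≤ x by omega)
  obtain ⟨w, hwge, hw⟩ := pg_hiChain hF (x - 1 - d.1) hdF hw₁ (by omega) rfl
  obtain ⟨w', hwle, hw'⟩ := pg_loChain hF (x - (x - 1)) hc hw₁ (by omega) rfl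
  have : (x - 1, y) ∈ F := hF.2.2.1 (x - 1) w' w y hw' hw (by omega) (by omega)
  exact h2 (x - 1) (by omega) this

/-- Step lemma (down-left): some cell on the next-lower diagonal has `x`-coordinate `≤ x`. -/
lemma pg_stepDL {F : Finset Cell} (hF : IsParallelogram F)
    {x y : ℕ} {d : Cell} (hc : (x, y) ∈ F) (hd : d ∈ F) (hlvl : d.1 + d.2 + 1 = x + y) :
    ∃ e ∈ F, e.1 + e.2 + 1 = x + y ∧ e.1 ≤ x := by
  by_cases h1 : ∃ y₁, y₁ + 1 = y ∧ (x, y₁) ∈ F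
  · obtain ⟨y₁, hy₁, hm⟩ := h1
    exact ⟨(x, y₁), hm, by omega, by omega⟩
  by_cases h2 : ∃ x₁, x₁ + 1 = x ∧ (x₁, y) ∈ F
  · obtain ⟨x₁, hx₁, hm⟩ := h2
    exact ⟨(x₁, y), hm, by omega, by omega⟩
  push_neg at h1 h2
  refine ⟨d, hd, by omega, ?_⟩
  by_contra hcon
  push_neg at hcon
  have hdF : (d.1, d.2) ∈ F := by rw [Prod.mk.eta]; exact hd
  obtain ⟨w, hwle, hw⟩ := pg_loChain hF (d.1 - x) hdF hc (by omega) rfl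
  have hy : w + 2 ≤ y := by omega
  have : (x, y - 1) ∈ F := hF.2.2.1 x w y (y - 1) hw hc (by omega) (by omega)
  exact h1 (y - 1) (by omega) this

/-- Step lemma (up-right): some cell on the next-higher diagonal has `x`-coordinate `≥ x`. -/
lemma pg_stepUR {F : Finset Cell} (hF : IsParallelogram F)
    {x y : ℕ} {d : Cell} (hc : (x, y) ∈ F) (hd : d ∈ F) (hlvl : d.1 + d.2 = x + y + 1) :
    ∃ e ∈ F, e.1 + e.2 = x + y + 1 ∧ x ≤ e.1 := by
  by_cases h1 : (x, y + 1) ∈ F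
  · exact ⟨(x, y + 1), h1, by omega, by omega⟩
  by_cases h2 : (x + 1, y) ∈ F
  · exact ⟨(x + 1, y), h2, by omega, by omega⟩
  refine ⟨d, hd, by omega, ?_⟩
  by_contra hcon
  push_neg at hcon
  have hdF : (d.1, d.2) ∈ F := by rw [Prod.mk.eta]; exact hd
  obtain ⟨w, hwge, hw⟩ := pg_hiChain hF (x - d.1) hdF hc (by omega) rfl
  have : (x, y + 1) ∈ F := hF.2.2.1 x y w (y + 1) hc hw (by omega) (by omega)
  exact h1 this

/-- Step lemma (up-left): some cell on the next-higher diagonal has `x`-coordinate `≤ x + 1`. -/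
lemma pg_stepUL {F : Finset Cell} (hF : IsParallelogram F)
    {x y : ℕ} {d : Cell} (hc : (x, y) ∈ F) (hd : d ∈ F) (hlvl : d.1 + d.2 = x + y + 1) :
    ∃ e ∈ F, e.1 + e.2 = x + y + 1 ∧ e.1 ≤ x + 1 := by
  by_cases h1 : (x, y + 1) ∈ F
  · exact ⟨(x, y + 1), h1, by omega, by omega⟩
  by_cases h2 : (x + 1, y) ∈ F
  · exact ⟨(x + 1, y), h2, by omega, by omega⟩
  refine ⟨d, hd, by omega, ?_⟩
  by_contra hcon
  push_neg at hcon
  have hdF : (d.1, d.2) ∈ F := by rw [Prod.mk.eta]; exact hd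
  obtain ⟨w₁, hw₁⟩ := pg_col_between hF hc hdF (show x ≤ x + 1 by omega) (by omega)
  obtain ⟨w, hwle, hw⟩ := pg_loChain hF (d.1 - (x + 1)) hdF hw₁ (by omega) rfl
  obtain ⟨w', hwge, hw'⟩ := pg_hiChain hF 1 hc hw₁ (by omega) (by omega)
  rcases Nat.eq_or_lt_of_le hwge with hh | hh
  · exact h2 (by rw [hh]; exact hw')
  · have : (x + 1, y) ∈ F := hF.2.2.1 (x + 1) w w' y hw hw' (by omega) (by omega)
    exact h2 this

/-- If there is a cell strictly below the diagonal of `(x,y)`, the next diagonal down is hit. -/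
lemma pg_levelDown {F : Finset Cell} (hF : IsParallelogram F)
    {x y : ℕ} {d : Cell} (hc : (x, y) ∈ F) (hd : d ∈ F) (hlow : d.1 + d.2 < x + y) :
    ∃ e ∈ F, e.1 + e.2 + 1 = x + y := by
  by_cases h1 : ∃ y₁, y₁ + 1 = y ∧ (x, y₁) ∈ F
  · obtain ⟨y₁, hy₁, hm⟩ := h1
    exact ⟨(x, y₁), hm, by omega⟩
  by_cases h2 : ∃ x₁, x₁ + 1 = x ∧ (x₁, y) ∈ F
  · obtain ⟨x₁, hx₁, hm⟩ := h2
    exact ⟨(x₁, y), hm, by omega⟩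
  push_neg at h1 h2
  exfalso
  have hdF : (d.1, d.2) ∈ F := by rw [Prod.mk.eta]; exact hd
  rcases le_or_gt x d.1 with hcase | hcase
  · obtain ⟨w, hwle, hw⟩ := pg_loChain hF (d.1 - x) hdF hc hcase rfl
    have hwy : y ≤ w := by
      by_contra hh
      push_neg at hh
      have : (x, y - 1) ∈ F := hF.2.2.1 x w y (y - 1) hw hc (by omega) (by omega)
      exact h1 (y - 1) (by omega) this
    omega
  · -- d.1 < x, so x ≥ 1 and column x - 1 is nonempty
    obtain ⟨w₁, hw₁⟩ := pg_col_between hF hdF hc (show d.1 ≤ x - 1 by omega)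
      (show x - 1 ≤ x by omega)
    obtain ⟨w', hwle, hw'⟩ := pg_loChain hF (x - (x - 1)) hc hw₁ (by omega) rfl
    rcases Nat.eq_or_lt_of_le hwle with hh | hh
    · exact h2 (x - 1) (by omega) (by rw [hh] at hw'; exact hw')
    · obtain ⟨zz, hz1, hz2⟩ := pg_col_overlap hF hw' (show (x - 1 + 1, y) ∈ F by
        rw [show x - 1 + 1 = x by omega]; exact hc)
      have hzzy : y ≤ zz := by
        by_contra hhh
        push_neg at hhh
        have : (x, y - 1) ∈ F := by
          have := hF.2.2.1 (x - 1 + 1) zz y (y - 1) hz2 (by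
            rw [show x - 1 + 1 = x by omega]; exact hc) (by omega) (by omega)
          rwa [show x - 1 + 1 = x by omega] at this
        exact h1 (y - 1) (by omega) this
      have : (x - 1, y) ∈ F := hF.2.2.1 (x - 1) w' zz y hw' hz1 (by omega) (by omega)
      exact h2 (x - 1) (by omega) this

/-- If there is a cell strictly above the diagonal of `(x,y)`, the next diagonal up is hit. -/
lemma pg_levelUp {F : Finset Cell} (hF : IsParallelogram F)
    {x y : ℕ} {d : Cell} (hc : (x, y) ∈ F) (hd : d ∈ F) (hhigh : x + y < d.1 + d.2) :
    ∃ e ∈ F, e.1 + e.2 = x + y + 1 := by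
  by_cases h1 : (x, y + 1) ∈ F
  · exact ⟨(x, y + 1), h1, by omega⟩
  by_cases h2 : (x + 1, y) ∈ F
  · exact ⟨(x + 1, y), h2, by omega⟩
  exfalso
  have hdF : (d.1, d.2) ∈ F := by rw [Prod.mk.eta]; exact hd
  rcases le_or_gt d.1 x with hcase | hcase
  · obtain ⟨w, hwge, hw⟩ := pg_hiChain hF (x - d.1) hdF hc hcase rfl
    have hwy : w ≤ y := by
      by_contra hh
      push_neg at hh
      exact h1 (hF.2.2.1 x y w (y + 1) hc hw (by omega) (by omega))
    omega
  · obtain ⟨w₁, hw₁⟩ := pg_col_between hF hc hdF (show x ≤ x + 1 by omega) (by omega)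
    obtain ⟨w', hwge, hw'⟩ := pg_hiChain hF 1 hc hw₁ (by omega) (by omega)
    rcases Nat.eq_or_lt_of_le hwge with hh | hh
    · exact h2 (by rw [hh]; exact hw')
    · obtain ⟨zz, hz1, hz2⟩ := pg_col_overlap hF hc hw'
      have hzzy : zz ≤ y := by
        by_contra hhh
        push_neg at hhh
        exact h1 (hF.2.2.1 x y zz (y + 1) hc hz1 (by omega) (by omega))
      exact h2 (hF.2.2.1 (x + 1) zz w' y hz2 hw' (by omega) (by omega))

/-- Diagonal levels of a parallelogram form an interval. -/
lemma pg_levelBetween {F : Finset Cell} (hF : IsParallelogram F) :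
    ∀ k : ℕ, ∀ {cc d : Cell} {t : ℕ}, cc ∈ F → d ∈ F → cc.1 + cc.2 ≤ t → t ≤ d.1 + d.2 →
      d.1 + d.2 - t = k → ∃ e ∈ F, e.1 + e.2 = t := by
  intro k
  induction k with
  | zero => intro cc d t _ hd _ h2 hk; exact ⟨d, hd, by omega⟩
  | succ n ih =>
      intro cc d t hc hd h1 h2 hk
      have hdF : (d.1, d.2) ∈ F := by rw [Prod.mk.eta]; exact hd
      obtain ⟨e, he, helvl⟩ := pg_levelDown hF hdF hc (by omega)
      exact ih hc he h1 (by omega) (by omega)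
/-! Chain infrastructure -/

lemma pg_mem_chainVerts {i j n : ℕ} {v : ℕ × ℕ} :
    v ∈ chainVerts i j n ↔ ∃ l, 1 ≤ l ∧ l ≤ n ∧ v = (i + l, j + n + 1 - l) := by
  unfold chainVerts
  simp only [Finset.mem_image, Finset.mem_Icc]
  constructor
  · rintro ⟨l, ⟨h1, h2⟩, h3⟩; exact ⟨l, h1, h2, h3.symm⟩
  · rintro ⟨l, h1, h2, h3⟩; exact ⟨l, ⟨h1, h2⟩, h3.symm⟩

lemma pg_mem_chainCells {i j n : ℕ} {e : Cell} :
    e ∈ chainCells i j n ↔ ∃ l, 1 ≤ l ∧ l ≤ n - 1 ∧ e = (i + l, j + n - l) := by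
  unfold chainCells
  simp only [Finset.mem_image, Finset.mem_Icc]
  constructor
  · rintro ⟨l, ⟨h1, h2⟩, h3⟩; exact ⟨l, h1, h2, h3.symm⟩
  · rintro ⟨l, h1, h2, h3⟩; exact ⟨l, ⟨h1, h2⟩, h3.symm⟩

lemma pg_chainVerts_sum {i j n : ℕ} {v : ℕ × ℕ} (h : v ∈ chainVerts i j n) :
    v.1 + v.2 = i + j + n + 1 ∧ i + 1 ≤ v.1 ∧ v.1 ≤ i + n := by
  obtain ⟨l, h1, h2, h3⟩ := pg_mem_chainVerts.1 h
  subst h3; simp; omega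

lemma pg_chainVerts_of {i j n x : ℕ} (h1 : i + 1 ≤ x) (h2 : x ≤ i + n) :
    (x, i + j + n + 1 - x) ∈ chainVerts i j n := by
  refine pg_mem_chainVerts.2 ⟨x - i, by omega, by omega, ?_⟩
  rw [Prod.ext_iff]; constructor <;> simp <;> omega

lemma pg_chainCells_lvl {i j n : ℕ} {e : Cell} (h : e ∈ chainCells i j n) :
    e.1 + e.2 = i + j + n ∧ i + 1 ≤ e.1 ∧ e.1 + 1 ≤ i + n ∧ 2 ≤ n := by
  obtain ⟨l, h1, h2, h3⟩ := pg_mem_chainCells.1 h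
  subst h3; simp; omega

lemma pg_cell_UL {i j n : ℕ} {e : Cell} (h : e ∈ chainCells i j n) :
    (e.1, e.2 + 1) ∈ chainVerts i j n := by
  obtain ⟨l, h1, h2, h3⟩ := pg_mem_chainCells.1 h
  subst h3
  refine pg_mem_chainVerts.2 ⟨l, h1, by omega, ?_⟩
  rw [Prod.ext_iff]; constructor <;> simp <;> omega

lemma pg_cell_LR {i j n : ℕ} {e : Cell} (h : e ∈ chainCells i j n) :
    (e.1 + 1, e.2) ∈ chainVerts i j n := by
  obtain ⟨l, h1, h2, h3⟩ := pg_mem_chainCells.1 h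
  subst h3
  refine pg_mem_chainVerts.2 ⟨l + 1, by omega, by omega, ?_⟩
  rw [Prod.ext_iff]; constructor <;> simp <;> omega

section ChainPart

variable {P : Finset Cell} {s : ℕ} {c : Fin s → ℕ × ℕ × ℕ}

lemma pg_cellToChain (hpart : IsDiagChainPartition P s c) {e : Cell} (he : e ∈ P) :
    ∃ k : Fin s, e ∈ chainCells (c k).1 (c k).2.1 (c k).2.2 := by
  have hv : (e.1, e.2 + 1) ∈ vertexSet P := pg_vert_ul (by rw [Prod.mk.eta]; exact he)
  rw [← hpart.2.2.1] at hv
  obtain ⟨k, _, hk⟩ := Finset.mem_biUnion.1 hv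
  obtain ⟨l, h1, h2, h3⟩ := pg_mem_chainVerts.1 hk
  rw [Prod.ext_iff] at h3
  simp only at h3
  rcases Nat.lt_or_ge l ((c k).2.2) with hl | hl
  · refine ⟨k, pg_mem_chainCells.2 ⟨l, h1, by omega, ?_⟩⟩
    rw [Prod.ext_iff]; constructor <;> simp <;> omega
  · exfalso
    have hln : l = (c k).2.2 := by omega
    have : e = ((c k).1 + (c k).2.2, (c k).2.1) := by
      rw [Prod.ext_iff]; constructor <;> simp <;> omega
    rw [this] at he
    exact (hpart.1 k).2.2.2.2 he

lemma pg_chainUnique (hpart : IsDiagChainPartition P s c) {k l : Fin s} {e : Cell}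
    (hk : e ∈ chainCells (c k).1 (c k).2.1 (c k).2.2)
    (hl : e ∈ chainCells (c l).1 (c l).2.1 (c l).2.2) : k = l := by
  by_contra hne
  have hd := hpart.2.1 k l hne
  exact (Finset.disjoint_left.1 hd) (pg_cell_UL hk) (pg_cell_UL hl)

lemma pg_adjSameChain (hpart : IsDiagChainPartition P s c) {k l : Fin s} {x y : ℕ}
    (hk : (x, y + 1) ∈ chainCells (c k).1 (c k).2.1 (c k).2.2)
    (hl : (x + 1, y) ∈ chainCells (c l).1 (c l).2.1 (c l).2.2) : k = l := by
  by_contra hne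
  have hd := hpart.2.1 k l hne
  have h1 := pg_cell_LR hk
  have h2 := pg_cell_UL hl
  simp only at h1 h2
  exact (Finset.disjoint_left.1 hd) h1 h2

lemma pg_t_mono (hpart : IsDiagChainPartition P s c) {k l : Fin s} (h : k ≤ l) :
    (c k).1 + (c k).2.1 + (c k).2.2 ≤ (c l).1 + (c l).2.1 + (c l).2.2 := by
  rcases eq_or_lt_of_le h with h | h
  · rw [h]
  · rcases hpart.2.2.2 k l h with h' | ⟨h', _⟩ <;> omega

lemma pg_lt_of_t (hpart : IsDiagChainPartition P s c) {k l : Fin s}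
    (h : (c k).1 + (c k).2.1 + (c k).2.2 < (c l).1 + (c l).2.1 + (c l).2.2) : k < l := by
  rcases lt_trichotomy k l with h' | h' | h'
  · exact h'
  · rw [h'] at h; omega
  · have := pg_t_mono hpart h'.le; omega

lemma pg_lt_of_ti (hpart : IsDiagChainPartition P s c) {k l : Fin s}
    (ht : (c k).1 + (c k).2.1 + (c k).2.2 = (c l).1 + (c l).2.1 + (c l).2.2)
    (hi : (c k).1 < (c l).1) : k < l := by
  rcases lt_trichotomy k l with h' | h' | h'
  · exact h'
  · rw [h'] at hi; omega
  · rcases hpart.2.2.2 l k h' with h'' | ⟨_, h''⟩ <;> omega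

lemma pg_span_disjoint (hpart : IsDiagChainPartition P s c) {k l : Fin s} (hne : k ≠ l)
    (ht : (c k).1 + (c k).2.1 + (c k).2.2 = (c l).1 + (c l).2.1 + (c l).2.2)
    (hi : (c k).1 < (c l).1) : (c k).1 + (c k).2.2 < (c l).1 + 1 := by
  by_contra hcon
  push_neg at hcon
  have h1 : ((c l).1 + 1, (c k).1 + (c k).2.1 + (c k).2.2 + 1 - ((c l).1 + 1))
      ∈ chainVerts (c k).1 (c k).2.1 (c k).2.2 := pg_chainVerts_of (by omega) (by omega)
  have h2 : ((c l).1 + 1, (c l).1 + (c l).2.1 + (c l).2.2 + 1 - ((c l).1 + 1))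
      ∈ chainVerts (c l).1 (c l).2.1 (c l).2.2 := by
    apply pg_chainVerts_of (by omega)
    have := (hpart.1 l).1
    omega
  rw [← ht] at h2
  exact (Finset.disjoint_left.1 (hpart.2.1 k l hne)) h1 h2

end ChainPart

/-- A vertex of `Q'` whose coordinate sum is minimal among cell levels is a lower-left corner. -/
lemma pg_vertex_min {Q' : Finset Cell} {v : ℕ × ℕ} {t : ℕ}
    (hτ : ∀ e ∈ Q', t ≤ e.1 + e.2) (hv : v ∈ vertexSet Q') (hsum : v.1 + v.2 = t) :
    (v.1, v.2) ∈ Q' := by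
  obtain ⟨e, he, h1, h2⟩ := pg_mem_vertexSet_iff.1 hv
  have := hτ e he
  have hv1 : e.1 = v.1 := by omega
  have hv2 : e.2 = v.2 := by omega
  rw [← hv1, ← hv2, Prod.mk.eta]; exact he

/-- A vertex of `Q'` at maximal coordinate sum is an upper-right corner. -/
lemma pg_vertex_max {Q' : Finset Cell} {v : ℕ × ℕ} {t : ℕ}
    (hτ : ∀ e ∈ Q', e.1 + e.2 ≤ t) (hv : v ∈ vertexSet Q') (hsum : v.1 + v.2 = t + 2) :
    ∃ e ∈ Q', e.1 + 1 = v.1 ∧ e.2 + 1 = v.2 ∧ e.1 + e.2 = t := by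
  obtain ⟨e, he, h1, h2⟩ := pg_mem_vertexSet_iff.1 hv
  have := hτ e he
  exact ⟨e, he, by omega, by omega, by omega⟩

lemma pg_vertex_sum_range {Q' : Finset Cell} {v : ℕ × ℕ} (hv : v ∈ vertexSet Q') :
    ∃ e ∈ Q', e.1 + e.2 ≤ v.1 + v.2 ∧ v.1 + v.2 ≤ e.1 + e.2 + 2 := by
  obtain ⟨e, he, h1, h2⟩ := pg_mem_vertexSet_iff.1 hv
  exact ⟨e, he, by omega, by omega⟩
section MeetsChain

variable {Q Q' : Finset Cell} {s : ℕ} {c : Fin s → ℕ × ℕ × ℕ}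

/-- Walking right along a diagonal from a chain cell to a `Q'` cell, the chain meets `V(Q')`. -/
lemma pg_meetsAuxR (hQ : IsParallelogram Q) (hsub : Q' ⊆ Q)
    (hpart : IsDiagChainPartition (Q \ Q') s c) :
    ∀ m : ℕ, ∀ {k : Fin s} {e e' : Cell}, e ∈ Q \ Q' →
      e ∈ chainCells (c k).1 (c k).2.1 (c k).2.2 → e' ∈ Q' → e.1 + e.2 = e'.1 + e'.2 →
      e.1 < e'.1 → e'.1 - e.1 = m →
      (chainVerts (c k).1 (c k).2.1 (c k).2.2 ∩ vertexSet Q').Nonempty := by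
  intro m
  induction m with
  | zero => intro k e e' _ _ _ _ hlt hm; omega
  | succ p ih =>
      intro k e e' he hec he' hlvl hlt hm
      have heQ : (e.1, e.2) ∈ Q := by
        rw [Prod.mk.eta]; exact (Finset.mem_sdiff.1 he).1
      have he'Q : (e'.1, e'.2) ∈ Q := by rw [Prod.mk.eta]; exact hsub he'
      have he2 : 1 ≤ e.2 := by omega
      have hgQ : (e.1 + 1, e.1 + e.2 - (e.1 + 1)) ∈ Q :=
        pg_runContig hQ heQ he'Q hlvl (by omega) (by omega)
      rw [show e.1 + e.2 - (e.1 + 1) = e.2 - 1 by omega] at hgQ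
      by_cases hgQ' : (e.1 + 1, e.2 - 1) ∈ Q'
      · refine ⟨(e.1 + 1, e.2), Finset.mem_inter.2 ⟨pg_cell_LR hec, ?_⟩⟩
        have := pg_vert_ul hgQ'
        rwa [show e.2 - 1 + 1 = e.2 by omega] at this
      · have hgP : (e.1 + 1, e.2 - 1) ∈ Q \ Q' := Finset.mem_sdiff.2 ⟨hgQ, hgQ'⟩
        obtain ⟨k', hk'⟩ := pg_cellToChain hpart hgP
        have hkk : k = k' := by
          apply pg_adjSameChain hpart (x := e.1) (y := e.2 - 1) _ hk'
          rw [show e.2 - 1 + 1 = e.2 by omega, Prod.mk.eta]; exact hec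
        subst hkk
        rcases lt_or_eq_of_le (show e.1 + 1 ≤ e'.1 by omega) with hh | hh
        · exact ih hgP hk' he' (by simp; omega) (by simpa using hh) (by simp; omega)
        · exfalso
          have : (e.1 + 1, e.2 - 1) = e' := by
            rw [Prod.ext_iff]; constructor
            · exact hh
            · simp; omega
          rw [this] at hgQ'
          exact hgQ' he'

/-- Walking left along a diagonal from a chain cell to a `Q'` cell. -/
lemma pg_meetsAuxL (hQ : IsParallelogram Q) (hsub : Q' ⊆ Q)
    (hpart : IsDiagChainPartition (Q \ Q') s c) :
    ∀ m : ℕ, ∀ {k : Fin s} {e e' : Cell}, e ∈ Q \ Q' →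
      e ∈ chainCells (c k).1 (c k).2.1 (c k).2.2 → e' ∈ Q' → e.1 + e.2 = e'.1 + e'.2 →
      e'.1 < e.1 → e.1 - e'.1 = m →
      (chainVerts (c k).1 (c k).2.1 (c k).2.2 ∩ vertexSet Q').Nonempty := by
  intro m
  induction m with
  | zero => intro k e e' _ _ _ _ hlt hm; omega
  | succ p ih =>
      intro k e e' he hec he' hlvl hlt hm
      have heQ : (e.1, e.2) ∈ Q := by
        rw [Prod.mk.eta]; exact (Finset.mem_sdiff.1 he).1
      have he'Q : (e'.1, e'.2) ∈ Q := by rw [Prod.mk.eta]; exact hsub he'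
      have hgQ : (e.1 - 1, e'.1 + e'.2 - (e.1 - 1)) ∈ Q :=
        pg_runContig hQ he'Q heQ hlvl.symm (by omega) (by omega)
      rw [show e'.1 + e'.2 - (e.1 - 1) = e.2 + 1 by omega] at hgQ
      by_cases hgQ' : (e.1 - 1, e.2 + 1) ∈ Q'
      · refine ⟨(e.1, e.2 + 1), Finset.mem_inter.2 ⟨pg_cell_UL hec, ?_⟩⟩
        have := pg_vert_lr hgQ'
        rwa [show e.1 - 1 + 1 = e.1 by omega] at this
      · have hgP : (e.1 - 1, e.2 + 1) ∈ Q \ Q' := Finset.mem_sdiff.2 ⟨hgQ, hgQ'⟩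
        obtain ⟨k', hk'⟩ := pg_cellToChain hpart hgP
        have hkk : k' = k := by
          apply pg_adjSameChain hpart (x := e.1 - 1) (y := e.2) hk'
          rw [show e.1 - 1 + 1 = e.1 by omega, Prod.mk.eta]; exact hec
        subst hkk
        rcases lt_or_eq_of_le (show e'.1 ≤ e.1 - 1 by omega) with hh | hh
        · exact ih hgP hk' he' (by simp; omega) (by simp; omega) (by simp; omega)
        · exfalso
          have : (e.1 - 1, e.2 + 1) = e' := by
            rw [Prod.ext_iff]; constructor
            · exact hh.symm
            · simp; omega
          rw [this] at hgQ'
          exact hgQ' he'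

/-- If a chain has a cell on the same diagonal as a `Q'` cell, the chain meets `V(Q')`. -/
lemma pg_levelMeets (hQ : IsParallelogram Q) (hsub : Q' ⊆ Q)
    (hpart : IsDiagChainPartition (Q \ Q') s c) {k : Fin s} {e e' : Cell}
    (he : e ∈ Q \ Q') (hec : e ∈ chainCells (c k).1 (c k).2.1 (c k).2.2)
    (he' : e' ∈ Q') (hlvl : e.1 + e.2 = e'.1 + e'.2) :
    (chainVerts (c k).1 (c k).2.1 (c k).2.2 ∩ vertexSet Q').Nonempty := by
  rcases lt_trichotomy e.1 e'.1 with h | h | h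
  · exact pg_meetsAuxR hQ hsub hpart _ he hec he' hlvl h rfl
  · exfalso
    have : e = e' := by rw [Prod.ext_iff]; exact ⟨h, by omega⟩
    rw [this] at he
    exact (Finset.mem_sdiff.1 he).2 he'
  · exact pg_meetsAuxL hQ hsub hpart _ he hec he' hlvl h rfl

/-- Two cells of `Q \ Q'` on a common diagonal avoided by `Q'` lie in the same chain. -/
lemma pg_runSameChainAux (hQ : IsParallelogram Q)
    (hpart : IsDiagChainPartition (Q \ Q') s c) :
    ∀ m : ℕ, ∀ {k l : Fin s} {e f : Cell}, e ∈ Q \ Q' → f ∈ Q \ Q' →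
      e.1 + e.2 = f.1 + f.2 → (∀ g ∈ Q', g.1 + g.2 ≠ e.1 + e.2) →
      e ∈ chainCells (c k).1 (c k).2.1 (c k).2.2 →
      f ∈ chainCells (c l).1 (c l).2.1 (c l).2.2 →
      e.1 ≤ f.1 → f.1 - e.1 = m → k = l := by
  intro m
  induction m with
  | zero =>
      intro k l e f _ _ hlvl _ hek hfl hle hm
      have : e = f := by rw [Prod.ext_iff]; constructor <;> omega
      rw [this] at hek
      exact pg_chainUnique hpart hek hfl
  | succ p ih =>
      intro k l e f he hf hlvl hno hek hfl hle hm
      have heQ : (e.1, e.2) ∈ Q := by rw [Prod.mk.eta]; exact (Finset.mem_sdiff.1 he).1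
      have hfQ : (f.1, f.2) ∈ Q := by rw [Prod.mk.eta]; exact (Finset.mem_sdiff.1 hf).1
      have he2 : 1 ≤ e.2 := by omega
      have hgQ : (e.1 + 1, e.1 + e.2 - (e.1 + 1)) ∈ Q :=
        pg_runContig hQ heQ hfQ hlvl (by omega) (by omega)
      rw [show e.1 + e.2 - (e.1 + 1) = e.2 - 1 by omega] at hgQ
      have hgQ' : (e.1 + 1, e.2 - 1) ∉ Q' := by
        intro hmem
        exact hno _ hmem (by simp; omega)
      have hgP : (e.1 + 1, e.2 - 1) ∈ Q \ Q' := Finset.mem_sdiff.2 ⟨hgQ, hgQ'⟩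
      obtain ⟨k', hk'⟩ := pg_cellToChain hpart hgP
      have hkk : k = k' := by
        apply pg_adjSameChain hpart (x := e.1) (y := e.2 - 1) _ hk'
        rw [show e.2 - 1 + 1 = e.2 by omega, Prod.mk.eta]; exact hek
      subst hkk
      refine ih hgP hf (by simp; omega) ?_ hk' hfl (by simp; omega) (by simp; omega)
      intro g hg
      have := hno g hg
      simp only []
      omega

lemma pg_runSameChain (hQ : IsParallelogram Q)
    (hpart : IsDiagChainPartition (Q \ Q') s c) {k l : Fin s} {e f : Cell}
    (he : e ∈ Q \ Q') (hf : f ∈ Q \ Q') (hlvl : e.1 + e.2 = f.1 + f.2)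
    (hno : ∀ g ∈ Q', g.1 + g.2 ≠ e.1 + e.2)
    (hek : e ∈ chainCells (c k).1 (c k).2.1 (c k).2.2)
    (hfl : f ∈ chainCells (c l).1 (c l).2.1 (c l).2.2) : k = l := by
  rcases le_total e.1 f.1 with h | h
  · exact pg_runSameChainAux hQ hpart _ he hf hlvl hno hek hfl h rfl
  · exact (pg_runSameChainAux hQ hpart _ hf he hlvl.symm (by rw [← hlvl]; exact hno)
      hfl hek h rfl).symm

end MeetsChain

/-- A rectangle contains cells at every diagonal level between two of its cells. -/
lemma pg_rectLevel {u w : ℕ × ℕ} {e₁ e₂ : Cell} (h1 : CellInInterval u w e₁)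
    (h2 : CellInInterval u w e₂) {t : ℕ} (ht1 : e₁.1 + e₁.2 ≤ t) (ht2 : t ≤ e₂.1 + e₂.2) :
    ∃ e : Cell, CellInInterval u w e ∧ e.1 + e.2 = t := by
  unfold CellInInterval at *
  refine ⟨(max u.1 (t + 1 - w.2), t - max u.1 (t + 1 - w.2)), ⟨?_, ?_, ?_, ?_⟩, ?_⟩ <;>
    simp only [] <;> omega
section CoreLemmas

variable {Q Q' : Finset Cell} {s : ℕ} {c : Fin s → ℕ × ℕ × ℕ} {a b : Fin s}

lemma pg_meets_range {k : Fin s} {τ₁ τ₂ : ℕ}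
    (hτ₁ : ∀ e ∈ Q', τ₁ ≤ e.1 + e.2) (hτ₂ : ∀ e ∈ Q', e.1 + e.2 ≤ τ₂)
    (hne : (chainVerts (c k).1 (c k).2.1 (c k).2.2 ∩ vertexSet Q').Nonempty) :
    τ₁ ≤ (c k).1 + (c k).2.1 + (c k).2.2 + 1 ∧
      (c k).1 + (c k).2.1 + (c k).2.2 + 1 ≤ τ₂ + 2 := by
  obtain ⟨v, hv⟩ := hne
  rw [Finset.mem_inter] at hv
  have hsum := (pg_chainVerts_sum hv.1).1
  obtain ⟨e, he, h1, h2⟩ := pg_vertex_sum_range hv.2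
  have := hτ₁ e he
  have := hτ₂ e he
  omega

lemma pg_i_lt_of_lt (hpart : IsDiagChainPartition (Q \ Q') s c) {k l : Fin s}
    (h : k < l)
    (ht : (c k).1 + (c k).2.1 + (c k).2.2 = (c l).1 + (c l).2.1 + (c l).2.2) :
    (c k).1 < (c l).1 := by
  rcases hpart.2.2.2 k l h with h' | ⟨_, h'⟩ <;> omega

lemma pg_coreA (hQ : IsParallelogram Q) (hQ' : IsParallelogram Q') (hsub : Q' ⊆ Q)
    (hpart : IsDiagChainPartition (Q \ Q') s c)
    (ha : (chainVerts (c a).1 (c a).2.1 (c a).2.2 ∩ vertexSet Q').Nonempty)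
    (hab : ∀ k : Fin s,
      (chainVerts (c k).1 (c k).2.1 (c k).2.2 ∩ vertexSet Q').Nonempty →
        a ≤ k ∧ k ≤ b)
    {u w : ℕ × ℕ} {k₁ k₂ : Fin s} {e₁ e₂ : Cell}
    (h1 : CellInInterval u w e₁) (h2 : CellInInterval u w e₂)
    (hiv : ∀ e : Cell, CellInInterval u w e → e ∈ Q \ Q')
    (hc1 : e₁ ∈ chainCells (c k₁).1 (c k₁).2.1 (c k₁).2.2)
    (hc2 : e₂ ∈ chainCells (c k₂).1 (c k₂).2.1 (c k₂).2.2)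
    (hk1 : k₁ ≤ a) (hk2 : a ≤ k₂) :
    ∃ e : Cell, CellInInterval u w e ∧ e ∈ chainCells (c a).1 (c a).2.1 (c a).2.2 := by
  classical
  rcases eq_or_lt_of_le hk1 with heq | hlt
  · exact ⟨e₁, h1, heq ▸ hc1⟩
  have hnm : ¬ (chainVerts (c k₁).1 (c k₁).2.1 (c k₁).2.2 ∩ vertexSet Q').Nonempty :=
    fun hm => absurd (hab k₁ hm).1 (not_le.2 hlt)
  -- min and max levels of Q'
  have hQ'ne : Q'.Nonempty := hQ'.1.1
  have hine : (Q'.image fun e => e.1 + e.2).Nonempty := hQ'ne.image _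
  set τ₁ := (Q'.image fun e => e.1 + e.2).min' hine with hτ₁def
  set τ₂ := (Q'.image fun e => e.1 + e.2).max' hine with hτ₂def
  have hτ₁ : ∀ e ∈ Q', τ₁ ≤ e.1 + e.2 := by
    intro e he
    rw [hτ₁def]
    exact Finset.min'_le (Q'.image fun e => e.1 + e.2) (e.1 + e.2)
      (Finset.mem_image_of_mem _ he)
  have hτ₂ : ∀ e ∈ Q', e.1 + e.2 ≤ τ₂ := by
    intro e he
    rw [hτ₂def]
    exact Finset.le_max' (Q'.image fun e => e.1 + e.2) (e.1 + e.2)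
      (Finset.mem_image_of_mem _ he)
  obtain ⟨emin, heminQ', hemin⟩ := Finset.mem_image.1 (Finset.min'_mem _ hine)
  obtain ⟨emax, hemaxQ', hemax⟩ := Finset.mem_image.1 (Finset.max'_mem _ hine)
  have hτ₁pos : 2 ≤ τ₁ := by
    have := hQ'.1.2.1 emin heminQ'
    omega
  have he₁P : e₁ ∈ Q \ Q' := hiv e₁ h1
  have he₂P : e₂ ∈ Q \ Q' := hiv e₂ h2
  have hlvl1 : e₁.1 + e₁.2 = (c k₁).1 + (c k₁).2.1 + (c k₁).2.2 :=
    (pg_chainCells_lvl hc1).1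
  have hlvl2 : e₂.1 + e₂.2 = (c k₂).1 + (c k₂).2.1 + (c k₂).2.2 :=
    (pg_chainCells_lvl hc2).1
  have hrangea := pg_meets_range hτ₁ hτ₂ ha
  have htmono1 : (c k₁).1 + (c k₁).2.1 + (c k₁).2.2 ≤ (c a).1 + (c a).2.1 + (c a).2.2 :=
    pg_t_mono hpart hlt.le
  have htmono2 : (c a).1 + (c a).2.1 + (c a).2.2 ≤ (c k₂).1 + (c k₂).2.1 + (c k₂).2.2 :=
    pg_t_mono hpart hk2
  -- the level of k₁ avoids [τ₁, τ₂]
  have hnotin : e₁.1 + e₁.2 < τ₁ ∨ τ₂ < e₁.1 + e₁.2 := by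
    by_contra h
    push_neg at h
    obtain ⟨e', he'Q', he'lvl⟩ :=
      pg_levelBetween hQ' (emax.1 + emax.2 - (e₁.1 + e₁.2)) heminQ' hemaxQ'
        (by omega) (by omega) rfl
    exact hnm (pg_levelMeets hQ hsub hpart he₁P hc1 he'Q' he'lvl.symm)
  rcases hnotin with hcase | hcase
  swap
  · -- case (ii) : level of k₁ is τ₂ + 1 ; impossible
    exfalso
    have ht1 : e₁.1 + e₁.2 = τ₂ + 1 := by omega
    have hta : (c a).1 + (c a).2.1 + (c a).2.2 = τ₂ + 1 := by omega
    obtain ⟨v, hv⟩ := ha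
    rw [Finset.mem_inter] at hv
    have hvsum := pg_chainVerts_sum hv.1
    obtain ⟨e'', he''Q', he''1, he''2, he''lvl⟩ :=
      pg_vertex_max hτ₂ hv.2 (by omega)
    -- a cell of Q at level τ₂ + 1 to the right of e''
    have he''Q : (e''.1, e''.2) ∈ Q := by rw [Prod.mk.eta]; exact hsub he''Q'
    have he₁Q : e₁ ∈ Q := (Finset.mem_sdiff.1 he₁P).1
    obtain ⟨f, hfQ, hflvl, hfge⟩ := pg_stepUR hQ he''Q he₁Q (by omega)
    have hfP : f ∈ Q \ Q' := by
      refine Finset.mem_sdiff.2 ⟨hfQ, fun hf' => ?_⟩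
      have := hτ₂ f hf'
      omega
    obtain ⟨kf, hkf⟩ := pg_cellToChain hpart hfP
    have hkfk : kf = k₁ := pg_runSameChain hQ hpart hfP he₁P (by omega)
      (by intro g hg; have := hτ₂ g hg; omega) hkf hc1
    subst hkfk
    have hfbound := pg_chainCells_lvl hkf
    have hik : (c kf).1 < (c a).1 := pg_i_lt_of_lt hpart hlt (by omega)
    have hspan := pg_span_disjoint hpart (fun h => absurd h (ne_of_lt hlt)) (by omega) hik
    omega
  · -- case (iii) : level of k₁ is < τ₁
    have hta1 : τ₁ ≤ (c a).1 + (c a).2.1 + (c a).2.2 + 1 := hrangea.1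
    -- a cell of the rectangle at level τ₁ - 1
    obtain ⟨estar, hestar, hestarlvl⟩ := pg_rectLevel h1 h2 (t := τ₁ - 1)
      (by omega) (by omega)
    have hestarP : estar ∈ Q \ Q' := hiv estar hestar
    obtain ⟨g, hg⟩ := pg_cellToChain hpart hestarP
    have htg : (c g).1 + (c g).2.1 + (c g).2.2 = τ₁ - 1 := by
      have := (pg_chainCells_lvl hg).1
      omega
    have hnoQ'lvl : ∀ g' ∈ Q', g'.1 + g'.2 ≠ τ₁ - 1 := by
      intro g' hg'
      have := hτ₁ g' hg'
      omega
    -- leftmost Q'-cell at level τ₁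
    have hfilne : ∃ x : ℕ, (x, τ₁ - x) ∈ Q' := by
      refine ⟨emin.1, ?_⟩
      have : (emin.1, τ₁ - emin.1) = emin := by
        rw [Prod.ext_iff]; constructor <;> simp <;> omega
      rw [this]; exact heminQ'
    set xstar := Nat.find hfilne with hxstardef
    have hxstarQ' : (xstar, τ₁ - xstar) ∈ Q' := Nat.find_spec hfilne
    have hxstarmin : ∀ e ∈ Q', e.1 + e.2 = τ₁ → xstar ≤ e.1 := by
      intro e he helvl
      rw [hxstardef]
      apply Nat.find_min' hfilne
      have : (e.1, τ₁ - e.1) = e := by rw [Prod.ext_iff]; constructor <;> simp <;> omega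
      rw [this]; exact he
    have hxstarpos : 1 ≤ xstar ∧ xstar + 1 ≤ τ₁ := by
      have := hQ'.1.2.1 _ hxstarQ'
      simp only at this
      have h2' := hτ₁ _ hxstarQ'
      simp only at h2'
      omega
    have hxstarQ : (xstar, τ₁ - xstar) ∈ Q := hsub hxstarQ'
    have hestarQ : estar ∈ Q := (Finset.mem_sdiff.1 hestarP).1
    -- step lemmas down from the cell (xstar, τ₁ - xstar)
    obtain ⟨f₁, hf₁Q, hf₁lvl, hf₁le⟩ := pg_stepDL hQ hxstarQ hestarQ (by omega)
    obtain ⟨f₂, hf₂Q, hf₂lvl, hf₂ge⟩ := pg_stepDR hQ hxstarQ hestarQ (by omega)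
    have hf₁P : f₁ ∈ Q \ Q' := Finset.mem_sdiff.2 ⟨hf₁Q, fun hf' => by
      have := hτ₁ f₁ hf'; omega⟩
    have hf₂P : f₂ ∈ Q \ Q' := Finset.mem_sdiff.2 ⟨hf₂Q, fun hf' => by
      have := hτ₁ f₂ hf'; omega⟩
    -- the lower-left corner of the leftmost Q'-cell at level τ₁ is a vertex of chain g
    have hvstar : (xstar, τ₁ - xstar) ∈ chainVerts (c g).1 (c g).2.1 (c g).2.2 := by
      rcases le_or_gt xstar f₂.1 with hcase2 | hcase2
      · -- the cell (xstar, τ₁ - 1 - xstar) is in Q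
        have hmQ : (xstar, f₁.1 + f₁.2 - xstar) ∈ Q := by
          refine pg_runContig hQ (by rw [Prod.mk.eta]; exact hf₁Q)
            (by rw [Prod.mk.eta]; exact hf₂Q) (by omega) hf₁le hcase2
        rw [show f₁.1 + f₁.2 - xstar = τ₁ - 1 - xstar by omega] at hmQ
        have hmP : (xstar, τ₁ - 1 - xstar) ∈ Q \ Q' := Finset.mem_sdiff.2 ⟨hmQ,
          fun hf' => hnoQ'lvl _ hf' (by simp; omega)⟩
        obtain ⟨km, hkm⟩ := pg_cellToChain hpart hmP
        have : km = g := pg_runSameChain hQ hpart hmP hestarP (by simp; omega)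
          (by intro g' hg'; have := hτ₁ g' hg'; simp; omega) hkm hg
        subst this
        have := pg_cell_UL hkm
        simp only at this
        rwa [show τ₁ - 1 - xstar + 1 = τ₁ - xstar by omega] at this
      · -- xstar = f₂.1 + 1 : the lower-right corner of f₂ is the vertex
        have hx : xstar = f₂.1 + 1 := by omega
        have hf₂c : (f₂.1, f₂.2) ∈ Q \ Q' := by rw [Prod.mk.eta]; exact hf₂P
        obtain ⟨km, hkm⟩ := pg_cellToChain hpart hf₂c
        have : km = g := pg_runSameChain hQ hpart hf₂c hestarP (by simp; omega)
          (by intro g' hg'; have := hτ₁ g' hg'; simp; omega) hkm hg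
        subst this
        have := pg_cell_LR hkm
        simp only at this
        have hco : (f₂.1 + 1, f₂.2) = (xstar, τ₁ - xstar) := by
          rw [Prod.ext_iff]; constructor <;> simp <;> omega
        rwa [hco] at this
    have hgmeets : (chainVerts (c g).1 (c g).2.1 (c g).2.2 ∩ vertexSet Q').Nonempty :=
      ⟨(xstar, τ₁ - xstar), Finset.mem_inter.2 ⟨hvstar, pg_vert_ll hxstarQ'⟩⟩
    have hag : a ≤ g := (hab g hgmeets).1
    have htag : (c a).1 + (c a).2.1 + (c a).2.2 = τ₁ - 1 := by
      have := pg_t_mono hpart hag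
      omega
    rcases eq_or_lt_of_le hag with heqag | hltag
    · exact ⟨estar, hestar, heqag ▸ hg⟩
    exfalso
    -- a < g at the same level: a is strictly left, but its Q'-vertex is right of xstar
    have hia : (c a).1 < (c g).1 := pg_i_lt_of_lt hpart hltag (by omega)
    have hspan := pg_span_disjoint hpart (fun h => absurd h (ne_of_lt hltag)) (by omega) hia
    obtain ⟨v, hv⟩ := ha
    rw [Finset.mem_inter] at hv
    have hvsum := pg_chainVerts_sum hv.1
    have hvQ'cell : (v.1, v.2) ∈ Q' := pg_vertex_min hτ₁ hv.2 (by omega)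
    have := hxstarmin _ hvQ'cell (by simp; omega)
    have hvg := pg_chainVerts_sum hvstar
    simp only at this hvg
    omega

end CoreLemmas
section CoreB

variable {Q Q' : Finset Cell} {s : ℕ} {c : Fin s → ℕ × ℕ × ℕ} {a b : Fin s}

lemma pg_coreB (hQ : IsParallelogram Q) (hQ' : IsParallelogram Q') (hsub : Q' ⊆ Q)
    (hpart : IsDiagChainPartition (Q \ Q') s c)
    (hb : (chainVerts (c b).1 (c b).2.1 (c b).2.2 ∩ vertexSet Q').Nonempty)
    (hab : ∀ k : Fin s,
      (chainVerts (c k).1 (c k).2.1 (c k).2.2 ∩ vertexSet Q').Nonempty →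
        a ≤ k ∧ k ≤ b)
    {u w : ℕ × ℕ} {k₁ k₂ : Fin s} {e₁ e₂ : Cell}
    (h1 : CellInInterval u w e₁) (h2 : CellInInterval u w e₂)
    (hiv : ∀ e : Cell, CellInInterval u w e → e ∈ Q \ Q')
    (hc1 : e₁ ∈ chainCells (c k₁).1 (c k₁).2.1 (c k₁).2.2)
    (hc2 : e₂ ∈ chainCells (c k₂).1 (c k₂).2.1 (c k₂).2.2)
    (hk1 : k₁ ≤ b) (hk2 : b ≤ k₂) :
    ∃ e : Cell, CellInInterval u w e ∧ e ∈ chainCells (c b).1 (c b).2.1 (c b).2.2 := by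
  classical
  rcases eq_or_lt_of_le hk2 with heq | hlt
  · exact ⟨e₂, h2, heq ▸ hc2⟩
  have hnm : ¬ (chainVerts (c k₂).1 (c k₂).2.1 (c k₂).2.2 ∩ vertexSet Q').Nonempty :=
    fun hm => absurd (hab k₂ hm).2 (not_le.2 hlt)
  have hQ'ne : Q'.Nonempty := hQ'.1.1
  have hine : (Q'.image fun e => e.1 + e.2).Nonempty := hQ'ne.image _
  set τ₁ := (Q'.image fun e => e.1 + e.2).min' hine with hτ₁def
  set τ₂ := (Q'.image fun e => e.1 + e.2).max' hine with hτ₂def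
  have hτ₁ : ∀ e ∈ Q', τ₁ ≤ e.1 + e.2 := by
    intro e he
    rw [hτ₁def]
    exact Finset.min'_le (Q'.image fun e => e.1 + e.2) (e.1 + e.2)
      (Finset.mem_image_of_mem _ he)
  have hτ₂ : ∀ e ∈ Q', e.1 + e.2 ≤ τ₂ := by
    intro e he
    rw [hτ₂def]
    exact Finset.le_max' (Q'.image fun e => e.1 + e.2) (e.1 + e.2)
      (Finset.mem_image_of_mem _ he)
  obtain ⟨emin, heminQ', hemin⟩ := Finset.mem_image.1 (Finset.min'_mem _ hine)
  obtain ⟨emax, hemaxQ', hemax⟩ := Finset.mem_image.1 (Finset.max'_mem _ hine)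
  have hτ₁pos : 2 ≤ τ₁ := by
    have := hQ'.1.2.1 emin heminQ'
    omega
  have he₁P : e₁ ∈ Q \ Q' := hiv e₁ h1
  have he₂P : e₂ ∈ Q \ Q' := hiv e₂ h2
  have hlvl1 : e₁.1 + e₁.2 = (c k₁).1 + (c k₁).2.1 + (c k₁).2.2 :=
    (pg_chainCells_lvl hc1).1
  have hlvl2 : e₂.1 + e₂.2 = (c k₂).1 + (c k₂).2.1 + (c k₂).2.2 :=
    (pg_chainCells_lvl hc2).1
  have hrangeb := pg_meets_range hτ₁ hτ₂ hb
  have htmono1 : (c k₁).1 + (c k₁).2.1 + (c k₁).2.2 ≤ (c b).1 + (c b).2.1 + (c b).2.2 :=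
    pg_t_mono hpart hk1
  have htmono2 : (c b).1 + (c b).2.1 + (c b).2.2 ≤ (c k₂).1 + (c k₂).2.1 + (c k₂).2.2 :=
    pg_t_mono hpart hlt.le
  have hnotin : e₂.1 + e₂.2 < τ₁ ∨ τ₂ < e₂.1 + e₂.2 := by
    by_contra h
    push_neg at h
    obtain ⟨e', he'Q', he'lvl⟩ :=
      pg_levelBetween hQ' (emax.1 + emax.2 - (e₂.1 + e₂.2)) heminQ' hemaxQ'
        (by omega) (by omega) rfl
    exact hnm (pg_levelMeets hQ hsub hpart he₂P hc2 he'Q' he'lvl.symm)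
  rcases hnotin with hcase | hcase
  · -- case (ii') : level of k₂ is τ₁ - 1 ; impossible
    exfalso
    have ht2 : e₂.1 + e₂.2 = τ₁ - 1 := by omega
    have htb : (c b).1 + (c b).2.1 + (c b).2.2 = τ₁ - 1 := by omega
    obtain ⟨v, hv⟩ := hb
    rw [Finset.mem_inter] at hv
    have hvsum := pg_chainVerts_sum hv.1
    have hvQ'cell : (v.1, v.2) ∈ Q' := pg_vertex_min hτ₁ hv.2 (by omega)
    have hvQ : (v.1, v.2) ∈ Q := hsub hvQ'cell
    have he₂Q : e₂ ∈ Q := (Finset.mem_sdiff.1 he₂P).1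
    obtain ⟨f, hfQ, hflvl, hfle⟩ := pg_stepDL hQ hvQ he₂Q (by omega)
    have hfP : f ∈ Q \ Q' := by
      refine Finset.mem_sdiff.2 ⟨hfQ, fun hf' => ?_⟩
      have := hτ₁ f hf'
      omega
    obtain ⟨kf, hkf⟩ := pg_cellToChain hpart hfP
    have hkfk : kf = k₂ := pg_runSameChain hQ hpart hfP he₂P (by omega)
      (by intro g hg; have := hτ₁ g hg; omega) hkf hc2
    subst hkfk
    have hfbound := pg_chainCells_lvl hkf
    have hik : (c b).1 < (c kf).1 := pg_i_lt_of_lt hpart hlt (by omega)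
    have hspan := pg_span_disjoint hpart (fun h => absurd h (ne_of_lt hlt)) (by omega) hik
    omega
  · -- case (iii') : level of k₂ is > τ₂
    have htb2 : (c b).1 + (c b).2.1 + (c b).2.2 ≤ τ₂ + 1 := by omega
    obtain ⟨estar, hestar, hestarlvl⟩ := pg_rectLevel h1 h2 (t := τ₂ + 1)
      (by omega) (by omega)
    have hestarP : estar ∈ Q \ Q' := hiv estar hestar
    obtain ⟨g, hg⟩ := pg_cellToChain hpart hestarP
    have htg : (c g).1 + (c g).2.1 + (c g).2.2 = τ₂ + 1 := by
      have := (pg_chainCells_lvl hg).1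
      omega
    have hnoQ'lvl : ∀ g' ∈ Q', g'.1 + g'.2 ≠ τ₂ + 1 := by
      intro g' hg'
      have := hτ₂ g' hg'
      omega
    -- rightmost Q'-cell at level τ₂
    have hfilne : ∃ x : ℕ, (x, τ₂ - x) ∈ Q' := by
      refine ⟨emax.1, ?_⟩
      have : (emax.1, τ₂ - emax.1) = emax := by
        rw [Prod.ext_iff]; constructor <;> simp <;> omega
      rw [this]; exact hemaxQ'
    set xr := Nat.findGreatest (fun x => (x, τ₂ - x) ∈ Q') τ₂ with hxrdef
    have hxrQ' : (xr, τ₂ - xr) ∈ Q' := by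
      rw [hxrdef]
      obtain ⟨x₀, hx₀⟩ := hfilne
      have hx₀le : x₀ ≤ τ₂ := by
        have := hτ₂ _ hx₀
        simp only at this
        omega
      exact Nat.findGreatest_spec (P := fun x => (x, τ₂ - x) ∈ Q') hx₀le hx₀
    have hxrmax : ∀ e ∈ Q', e.1 + e.2 = τ₂ → e.1 ≤ xr := by
      intro e he helvl
      rw [hxrdef]
      have hee : (e.1, τ₂ - e.1) ∈ Q' := by
        have : (e.1, τ₂ - e.1) = e := by rw [Prod.ext_iff]; constructor <;> simp <;> omega
        rw [this]; exact he
      exact Nat.le_findGreatest (P := fun x => (x, τ₂ - x) ∈ Q') (by omega) hee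
    have hxrlt : xr + 1 ≤ τ₂ := by
      have := hQ'.1.2.1 _ hxrQ'
      simp only at this
      have h2' := hτ₁ _ hxrQ'
      simp only at h2'
      omega
    have hxrQ : (xr, τ₂ - xr) ∈ Q := hsub hxrQ'
    have hestarQ : estar ∈ Q := (Finset.mem_sdiff.1 hestarP).1
    obtain ⟨f₁, hf₁Q, hf₁lvl, hf₁le⟩ := pg_stepUL hQ hxrQ hestarQ (by omega)
    obtain ⟨f₂, hf₂Q, hf₂lvl, hf₂ge⟩ := pg_stepUR hQ hxrQ hestarQ (by omega)
    have hf₁P : f₁ ∈ Q \ Q' := Finset.mem_sdiff.2 ⟨hf₁Q, fun hf' => by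
      have := hτ₂ f₁ hf'; omega⟩
    have hf₂P : f₂ ∈ Q \ Q' := Finset.mem_sdiff.2 ⟨hf₂Q, fun hf' => by
      have := hτ₂ f₂ hf'; omega⟩
    -- the upper-right corner of the rightmost Q'-cell at level τ₂ is a vertex of chain g
    have hvstar : (xr + 1, τ₂ + 1 - xr) ∈ chainVerts (c g).1 (c g).2.1 (c g).2.2 := by
      rcases le_or_gt f₁.1 xr with hcase2 | hcase2
      · have hmQ : (xr, f₁.1 + f₁.2 - xr) ∈ Q :=
          pg_runContig hQ (by rw [Prod.mk.eta]; exact hf₁Q) (by rw [Prod.mk.eta]; exact hf₂Q)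
            (by omega) hcase2 hf₂ge
        rw [show f₁.1 + f₁.2 - xr = τ₂ + 1 - xr by omega] at hmQ
        have hmP : (xr, τ₂ + 1 - xr) ∈ Q \ Q' := Finset.mem_sdiff.2 ⟨hmQ,
          fun hf' => hnoQ'lvl _ hf' (by simp; omega)⟩
        obtain ⟨km, hkm⟩ := pg_cellToChain hpart hmP
        have : km = g := pg_runSameChain hQ hpart hmP hestarP (by simp; omega)
          (by intro g' hg'; have := hτ₂ g' hg'; simp; omega) hkm hg
        subst this
        have := pg_cell_LR hkm
        simpa using this
      · have hx : f₁.1 = xr + 1 := by omega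
        have hf₁c : (f₁.1, f₁.2) ∈ Q \ Q' := by rw [Prod.mk.eta]; exact hf₁P
        obtain ⟨km, hkm⟩ := pg_cellToChain hpart hf₁c
        have : km = g := pg_runSameChain hQ hpart hf₁c hestarP (by simp; omega)
          (by intro g' hg'; have := hτ₂ g' hg'; simp; omega) hkm hg
        subst this
        have := pg_cell_UL hkm
        simp only at this
        have hco : (f₁.1, f₁.2 + 1) = (xr + 1, τ₂ + 1 - xr) := by
          rw [Prod.ext_iff]; constructor <;> simp <;> omega
        rwa [hco] at this
    have hgmeets : (chainVerts (c g).1 (c g).2.1 (c g).2.2 ∩ vertexSet Q').Nonempty := by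
      refine ⟨(xr + 1, τ₂ + 1 - xr), Finset.mem_inter.2 ⟨hvstar, ?_⟩⟩
      have := pg_vert_ur hxrQ'
      rwa [show τ₂ - xr + 1 = τ₂ + 1 - xr by omega] at this
    have hgb : g ≤ b := (hab g hgmeets).2
    have htbg : (c b).1 + (c b).2.1 + (c b).2.2 = τ₂ + 1 := by
      have := pg_t_mono hpart hgb
      omega
    rcases eq_or_lt_of_le hgb with heqgb | hltgb
    · exact ⟨estar, hestar, heqgb ▸ hg⟩
    exfalso
    -- g < b at the same level: g strictly left, but b's Q'-vertex is left of xr+1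
    have hig : (c g).1 < (c b).1 := pg_i_lt_of_lt hpart hltgb (by omega)
    have hspan := pg_span_disjoint hpart (fun h => absurd h (ne_of_lt hltgb)) (by omega) hig
    obtain ⟨v, hv⟩ := hb
    rw [Finset.mem_inter] at hv
    have hvsum := pg_chainVerts_sum hv.1
    obtain ⟨e'', he''Q', he''1, he''2, he''lvl⟩ := pg_vertex_max hτ₂ hv.2 (by omega)
    have := hxrmax _ he''Q' he''lvl
    have hvg := pg_chainVerts_sum hvstar
    simp only at hvg
    omega

end CoreB
lemma pg_chainCells_sub {P : Finset Cell} {s : ℕ} {c : Fin s → ℕ × ℕ × ℕ}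
    (hpart : IsDiagChainPartition P s c) (k : Fin s) :
    chainCells (c k).1 (c k).2.1 (c k).2.2 ⊆ P := by
  intro e he
  obtain ⟨l, h1, h2, h3⟩ := pg_mem_chainCells.1 he
  subst h3
  exact (hpart.1 k).2.2.1 l h1 h2

end AuxGeom

theorem pg_main (K : Type*) [Field K]
    (Q Q' : Finset Cell) (hQ : IsParallelogram Q) (hQ' : IsParallelogram Q')
    (hsub : Q' ⊆ Q)
    (s : ℕ) (c : Fin s → ℕ × ℕ × ℕ)
    (hpart : IsDiagChainPartition (Q \ Q') s c)
    (a b : Fin s)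
    (ha : (chainVerts (c a).1 (c a).2.1 (c a).2.2 ∩ vertexSet Q').Nonempty)
    (hb : (chainVerts (c b).1 (c b).2.1 (c b).2.2 ∩ vertexSet Q').Nonempty)
    (hab : ∀ k : Fin s,
      (chainVerts (c k).1 (c k).2.1 (c k).2.2 ∩ vertexSet Q').Nonempty →
        a ≤ k ∧ k ≤ b) :
    (cellsIdeal K (Q \ Q')
          ((Finset.univ.filter (fun k : Fin s => k < b)).biUnion
            fun k => chainCells (c k).1 (c k).2.1 (c k).2.2) +
        cellsIdeal K (Q \ Q')
          ((Finset.univ.filter (fun k : Fin s => a < k)).biUnion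
            fun k => chainCells (c k).1 (c k).2.1 (c k).2.2) =
      polyominoIdeal K (Q \ Q')) ↔
    ¬ ∃ (u w : ℕ × ℕ) (c₁ c₂ : Cell), IsInnerInterval (Q \ Q') u w ∧
        c₁ ∈ chainCells (c a).1 (c a).2.1 (c a).2.2 ∧
        c₂ ∈ chainCells (c b).1 (c b).2.1 (c b).2.2 ∧
        CellInInterval u w c₁ ∧ CellInInterval u w c₂ := by
  classical
  set Q1 : Finset Cell := (Finset.univ.filter (fun k : Fin s => k < b)).biUnion
    (fun k => chainCells (c k).1 (c k).2.1 (c k).2.2) with hQ1def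
  set Q2 : Finset Cell := (Finset.univ.filter (fun k : Fin s => a < k)).biUnion
    (fun k => chainCells (c k).1 (c k).2.1 (c k).2.2) with hQ2def
  have hQ1sub : Q1 ⊆ Q \ Q' := by
    intro e he
    rw [hQ1def, Finset.mem_biUnion] at he
    obtain ⟨k, _, hk⟩ := he
    exact pg_chainCells_sub hpart k hk
  have hQ2sub : Q2 ⊆ Q \ Q' := by
    intro e he
    rw [hQ2def, Finset.mem_biUnion] at he
    obtain ⟨k, _, hk⟩ := he
    exact pg_chainCells_sub hpart k hk
  constructor
  · -- equality implies no bad interval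
    intro heq
    rintro ⟨u, w, c₁, c₂, hiv, hc₁, hc₂, hin1, hin2⟩
    -- the four corner vertices of the interval
    have hu1w1 : u.1 < w.1 := hiv.1
    have hu2w2 : u.2 < w.2 := hiv.2.1
    have hcellu : (u.1, u.2) ∈ Q \ Q' := hiv.2.2 _ ⟨le_rfl, hu1w1, le_rfl, hu2w2⟩
    have hcellw : (w.1 - 1, w.2 - 1) ∈ Q \ Q' := hiv.2.2 _ ⟨by omega, by omega, by omega,
      by omega⟩
    have hcellc : (u.1, w.2 - 1) ∈ Q \ Q' := hiv.2.2 _ ⟨le_rfl, hu1w1, by omega, by omega⟩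
    have hcelld : (w.1 - 1, u.2) ∈ Q \ Q' := hiv.2.2 _ ⟨by omega, by omega, le_rfl, hu2w2⟩
    have hu : u ∈ vertexSet (Q \ Q') := by
      have := pg_vert_ll hcellu; rwa [Prod.mk.eta] at this
    have hw : w ∈ vertexSet (Q \ Q') := by
      have := pg_vert_ur hcellw
      rwa [show (w.1 - 1 + 1, w.2 - 1 + 1) = w by rw [Prod.ext_iff]; omega] at this
    have hcv : (u.1, w.2) ∈ vertexSet (Q \ Q') := by
      have := pg_vert_ul hcellc
      rwa [show w.2 - 1 + 1 = w.2 by omega] at this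
    have hdv : (w.1, u.2) ∈ vertexSet (Q \ Q') := by
      have := pg_vert_lr hcelld
      rwa [show w.1 - 1 + 1 = w.1 by omega] at this
    -- the substitution homomorphism
    set W : ℕ × ℕ → Prop := fun v => v = u ∨ v = w ∨ v = (u.1, w.2) ∨ v = (w.1, u.2)
      with hWdef
    set φ : PolyRing K (Q \ Q') →ₐ[K] PolyRing K (Q \ Q') :=
      MvPolynomial.aeval (fun v : {v : ℕ × ℕ // v ∈ vertexSet (Q \ Q')} =>
        if W (v : ℕ × ℕ) then (X v : PolyRing K (Q \ Q')) else 0) with hφdef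
    have hφX : ∀ v : {v : ℕ × ℕ // v ∈ vertexSet (Q \ Q')},
        φ (X v) = if W (v : ℕ × ℕ) then (X v : PolyRing K (Q \ Q')) else 0 := by
      intro v
      rw [hφdef, MvPolynomial.aeval_X]
    -- the interval [u,w] is not an inner interval of Q1 nor of Q2
    have hbad1 : ¬ IsInnerInterval Q1 u w := by
      intro hII
      have : c₂ ∈ Q1 := hII.2.2 c₂ hin2
      rw [hQ1def, Finset.mem_biUnion] at this
      obtain ⟨k, hkmem, hk⟩ := this
      have hkb : k = b := pg_chainUnique hpart hk hc₂
      rw [Finset.mem_filter] at hkmem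
      exact absurd (hkb ▸ hkmem.2) (lt_irrefl b)
    have hbad2 : ¬ IsInnerInterval Q2 u w := by
      intro hII
      have : c₁ ∈ Q2 := hII.2.2 c₁ hin1
      rw [hQ2def, Finset.mem_biUnion] at this
      obtain ⟨k, hkmem, hk⟩ := this
      have hka : k = a := pg_chainUnique hpart hk hc₁
      rw [Finset.mem_filter] at hkmem
      exact absurd (hka ▸ hkmem.2) (lt_irrefl a)
    -- φ kills every generator of both summands
    have hgen : ∀ f ∈ innerIntervalBinomials K (Q \ Q') Q1 ∪
        innerIntervalBinomials K (Q \ Q') Q2, φ f = 0 := by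
      rintro f (hf | hf) <;>
      · obtain ⟨a', b', c', d', hII, hc', hd', rfl⟩ := hf
        have hfacts : (↑a' : ℕ × ℕ).1 < (↑b' : ℕ × ℕ).1 ∧ (↑a' : ℕ × ℕ).2 < (↑b' : ℕ × ℕ).2 :=
          ⟨hII.1, hII.2.1⟩
        have hcorner : ((W ↑a' ∧ W ↑b') ∨ (W ↑c' ∧ W ↑d')) →
            (↑a' : ℕ × ℕ) = u ∧ (↑b' : ℕ × ℕ) = w := by
          rintro (⟨hWa, hWb⟩ | ⟨hWc, hWd⟩)
          · rw [hWdef] at hWa hWb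
            simp only [Prod.ext_iff] at hWa hWb ⊢
            omega
          · rw [hWdef] at hWc hWd
            rw [hc'] at hWc
            rw [hd'] at hWd
            simp only [Prod.ext_iff] at hWc hWd ⊢
            omega
        have hnot : ¬ ((↑a' : ℕ × ℕ) = u ∧ (↑b' : ℕ × ℕ) = w) := by
          rintro ⟨h1, h2⟩
          rw [h1, h2] at hII
          first
          | exact hbad1 hII
          | exact hbad2 hII
        rw [map_sub, map_mul, map_mul, hφX, hφX, hφX, hφX]
        have hz1 : ¬ (W ↑a') ∨ ¬ (W ↑b') := by
          by_contra hcon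
          push_neg at hcon
          exact hnot (hcorner (Or.inl ⟨hcon.1, hcon.2⟩))
        have hz2 : ¬ (W ↑c') ∨ ¬ (W ↑d') := by
          by_contra hcon
          push_neg at hcon
          exact hnot (hcorner (Or.inr ⟨hcon.1, hcon.2⟩))
        have e1 : (if W (↑a' : ℕ × ℕ) then (X a' : PolyRing K (Q \ Q')) else 0) *
            (if W (↑b' : ℕ × ℕ) then (X b' : PolyRing K (Q \ Q')) else 0) = 0 := by
          rcases hz1 with h | h
          · rw [if_neg h, zero_mul]
          · rw [if_neg h, mul_zero]
        have e2 : (if W (↑c' : ℕ × ℕ) then (X c' : PolyRing K (Q \ Q')) else 0) *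
            (if W (↑d' : ℕ × ℕ) then (X d' : PolyRing K (Q \ Q')) else 0) = 0 := by
          rcases hz2 with h | h
          · rw [if_neg h, zero_mul]
          · rw [if_neg h, mul_zero]
        rw [e1, e2, sub_zero]
    -- the binomial of the bad interval
    set f₀ : PolyRing K (Q \ Q') :=
      X ⟨u, hu⟩ * X ⟨w, hw⟩ - X ⟨(u.1, w.2), hcv⟩ * X ⟨(w.1, u.2), hdv⟩ with hf₀def
    have hf₀mem : f₀ ∈ polyominoIdeal K (Q \ Q') := by
      apply Ideal.subset_span
      exact ⟨⟨u, hu⟩, ⟨w, hw⟩, ⟨(u.1, w.2), hcv⟩, ⟨(w.1, u.2), hdv⟩, hiv, rfl, rfl, rfl⟩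
    rw [← heq] at hf₀mem
    have hker : φ f₀ = 0 := by
      unfold cellsIdeal at hf₀mem
      rw [Submodule.add_eq_sup, ← Ideal.span_union] at hf₀mem
      refine Submodule.span_induction ?_ (map_zero φ)
        (fun x y _ _ hx hy => by rw [map_add, hx, hy, add_zero])
        (fun r x _ hx => by rw [smul_eq_mul, map_mul, hx, mul_zero]) hf₀mem
      intro x hx
      exact hgen x hx
    have hφf₀ : φ f₀ = f₀ := by
      rw [hf₀def, map_sub, map_mul, map_mul, hφX, hφX, hφX, hφX]
      rw [if_pos (Or.inl rfl), if_pos (Or.inr (Or.inl rfl)),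
        if_pos (Or.inr (Or.inr (Or.inl rfl))), if_pos (Or.inr (Or.inr (Or.inr rfl)))]
    -- f₀ ≠ 0
    have hne : f₀ ≠ 0 := by
      have hXX : ∀ (p q : {v : ℕ × ℕ // v ∈ vertexSet (Q \ Q')}),
          (X p * X q : PolyRing K (Q \ Q')) =
            MvPolynomial.monomial (Finsupp.single p 1 + Finsupp.single q 1) 1 := by
        intro p q
        rw [MvPolynomial.X, MvPolynomial.X, MvPolynomial.monomial_mul, one_mul]
      have hwu : (⟨w, hw⟩ : {v : ℕ × ℕ // v ∈ vertexSet (Q \ Q')}) ≠ ⟨u, hu⟩ := by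
        intro hh
        simp only [Subtype.mk.injEq, Prod.ext_iff] at hh
        omega
      have hcu : (⟨(u.1, w.2), hcv⟩ : {v : ℕ × ℕ // v ∈ vertexSet (Q \ Q')}) ≠ ⟨u, hu⟩ := by
        intro hh
        simp only [Subtype.mk.injEq, Prod.ext_iff] at hh
        omega
      have hdu : (⟨(w.1, u.2), hdv⟩ : {v : ℕ × ℕ // v ∈ vertexSet (Q \ Q')}) ≠ ⟨u, hu⟩ := by
        intro hh
        simp only [Subtype.mk.injEq, Prod.ext_iff] at hh
        omega
      have hm1 : ((Finsupp.single (⟨u, hu⟩ : {v : ℕ × ℕ // v ∈ vertexSet (Q \ Q')}) 1 +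
          Finsupp.single ⟨w, hw⟩ 1) : {v : ℕ × ℕ // v ∈ vertexSet (Q \ Q')} →₀ ℕ) ⟨u, hu⟩
          = 1 := by
        rw [Finsupp.add_apply, Finsupp.single_eq_same, Finsupp.single_eq_of_ne' hwu]
        omega
      have hm2 : ((Finsupp.single (⟨(u.1, w.2), hcv⟩ :
          {v : ℕ × ℕ // v ∈ vertexSet (Q \ Q')}) 1 +
          Finsupp.single ⟨(w.1, u.2), hdv⟩ 1) : {v : ℕ × ℕ // v ∈ vertexSet (Q \ Q')} →₀ ℕ)
          ⟨u, hu⟩ = 0 := by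
        rw [Finsupp.add_apply, Finsupp.single_eq_of_ne' hcu, Finsupp.single_eq_of_ne' hdu]
        omega
      have hmne : (Finsupp.single (⟨(u.1, w.2), hcv⟩ :
          {v : ℕ × ℕ // v ∈ vertexSet (Q \ Q')}) 1 + Finsupp.single ⟨(w.1, u.2), hdv⟩ 1) ≠
          (Finsupp.single (⟨u, hu⟩ : {v : ℕ × ℕ // v ∈ vertexSet (Q \ Q')}) 1 +
            Finsupp.single ⟨w, hw⟩ 1) := by
        intro hh
        rw [hh] at hm2
        rw [hm1] at hm2
        exact one_ne_zero hm2
      intro hcon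
      have hco : MvPolynomial.coeff (Finsupp.single
          (⟨u, hu⟩ : {v : ℕ × ℕ // v ∈ vertexSet (Q \ Q')}) 1 + Finsupp.single ⟨w, hw⟩ 1)
          f₀ = 1 := by
        rw [hf₀def, hXX, hXX, MvPolynomial.coeff_sub, MvPolynomial.coeff_monomial,
          if_pos rfl, MvPolynomial.coeff_monomial, if_neg hmne, sub_zero]
      rw [hcon, MvPolynomial.coeff_zero] at hco
      exact one_ne_zero hco.symm
    rw [hφf₀] at hker
    exact hne hker
  · -- no bad interval implies equality
    intro hno
    have hapleb : a ≤ b := (hab a ha).2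
    apply le_antisymm
    · rw [Submodule.add_eq_sup]
      apply sup_le
      · apply Ideal.span_mono
        rintro f ⟨a', b', c', d', hII, hc', hd', rfl⟩
        exact ⟨a', b', c', d', ⟨hII.1, hII.2.1, fun e he => hQ1sub (hII.2.2 e he)⟩,
          hc', hd', rfl⟩
      · apply Ideal.span_mono
        rintro f ⟨a', b', c', d', hII, hc', hd', rfl⟩
        exact ⟨a', b', c', d', ⟨hII.1, hII.2.1, fun e he => hQ2sub (hII.2.2 e he)⟩,
          hc', hd', rfl⟩
    · rw [polyominoIdeal, cellsIdeal, Ideal.span_le]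
      rintro f ⟨a', b', c', d', hII, hc', hd', rfl⟩
      by_cases hq1 : ∀ e : Cell, CellInInterval (↑a') (↑b') e → e ∈ Q1
      · apply Ideal.mem_sup_left
        exact Ideal.subset_span ⟨a', b', c', d', ⟨hII.1, hII.2.1, hq1⟩, hc', hd', rfl⟩
      by_cases hq2 : ∀ e : Cell, CellInInterval (↑a') (↑b') e → e ∈ Q2
      · apply Ideal.mem_sup_right
        exact Ideal.subset_span ⟨a', b', c', d', ⟨hII.1, hII.2.1, hq2⟩, hc', hd', rfl⟩
      exfalso
      push_neg at hq1 hq2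
      obtain ⟨e₂, he₂in, he₂not⟩ := hq1
      obtain ⟨e₁, he₁in, he₁not⟩ := hq2
      have he₁P : e₁ ∈ Q \ Q' := hII.2.2 e₁ he₁in
      have he₂P : e₂ ∈ Q \ Q' := hII.2.2 e₂ he₂in
      obtain ⟨k₁, hk₁⟩ := pg_cellToChain hpart he₁P
      obtain ⟨k₂, hk₂⟩ := pg_cellToChain hpart he₂P
      have hk₁a : k₁ ≤ a := by
        by_contra hcon
        push_neg at hcon
        exact he₁not (by
          rw [hQ2def, Finset.mem_biUnion]
          exact ⟨k₁, Finset.mem_filter.2 ⟨Finset.mem_univ _, hcon⟩, hk₁⟩)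
      have hk₂b : b ≤ k₂ := by
        by_contra hcon
        push_neg at hcon
        exact he₂not (by
          rw [hQ1def, Finset.mem_biUnion]
          exact ⟨k₂, Finset.mem_filter.2 ⟨Finset.mem_univ _, hcon⟩, hk₂⟩)
      obtain ⟨eA, heAin, heAcc⟩ := pg_coreA hQ hQ' hsub hpart ha hab he₁in he₂in hII.2.2
        hk₁ hk₂ hk₁a (le_trans hapleb hk₂b)
      obtain ⟨eB, heBin, heBcc⟩ := pg_coreB hQ hQ' hsub hpart hb hab he₁in he₂in hII.2.2
        hk₁ hk₂ (le_trans hk₁a hapleb) hk₂b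
      exact hno ⟨↑a', ↑b', eA, eB, hII, heAcc, heBcc, heAin, heBin⟩


/-- In the situation of removing a parallelogram sub-polyomino `Q'`
from a parallelogram polyomino `Q`, `I_{Q₁} + I_{Q₂} = I_P` holds if and only if no
inner interval of `P` contains both a cell of `𝒞_a` and a cell of `𝒞_b`. -/
theorem parallelogramMinusParallelogram_sum_iff (K : Type*) [Field K]
    (Q Q' : Finset Cell) (hQ : IsParallelogram Q) (hQ' : IsParallelogram Q')
    (hsub : Q' ⊆ Q)
    (s : ℕ) (c : Fin s → ℕ × ℕ × ℕ)
    (hpart : IsDiagChainPartition (Q \ Q') s c)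
    (a b : Fin s)
    (ha : (chainVerts (c a).1 (c a).2.1 (c a).2.2 ∩ vertexSet Q').Nonempty)
    (hb : (chainVerts (c b).1 (c b).2.1 (c b).2.2 ∩ vertexSet Q').Nonempty)
    (hab : ∀ k : Fin s,
      (chainVerts (c k).1 (c k).2.1 (c k).2.2 ∩ vertexSet Q').Nonempty →
        a ≤ k ∧ k ≤ b) :
    (cellsIdeal K (Q \ Q')
          ((Finset.univ.filter (fun k : Fin s => k < b)).biUnion
            fun k => chainCells (c k).1 (c k).2.1 (c k).2.2) +
        cellsIdeal K (Q \ Q')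
          ((Finset.univ.filter (fun k : Fin s => a < k)).biUnion
            fun k => chainCells (c k).1 (c k).2.1 (c k).2.2) =
      polyominoIdeal K (Q \ Q')) ↔
    ¬ ∃ (u w : ℕ × ℕ) (c₁ c₂ : Cell), IsInnerInterval (Q \ Q') u w ∧
        c₁ ∈ chainCells (c a).1 (c a).2.1 (c a).2.2 ∧
        c₂ ∈ chainCells (c b).1 (c b).2.1 (c b).2.2 ∧
        CellInInterval u w c₁ ∧ CellInInterval u w c₂ :=
  pg_main K Q Q' hQ hQ' hsub s c hpart a b ha hb hab
end
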